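/- arXiv:1412.6176 — 3 statements merged into one kernel-verified Lean document; each statement's English description precedes it below -/
import Mathlib

section
/- Let p be a prime and N a normal subgroup of P_n of depth j. Then the commutator subgroup [T_j, T_j] is contained in N. -/
variable (p n : ℕ)

/-- The underlying function of the generator `σ_i`. -/
def sigmaFun (i : Fin n) (lam : Fin n → ZMod p) : Fin n → ZMod p :=
  fun k => if k = i ∧ ∀ j : Fin n, j < i → lam j = 0 then lam k + 1 else lam k

lemma sigmaFun_apply_ne (i : Fin n) (lam : Fin n → ZMod p) {k : Fin n} (h : k ≠ i) :
    sigmaFun p n i lam k = lam k := by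
  simp [sigmaFun, h]

/-- The inverse function of `σ_i`. -/
def sigmaInvFun (i : Fin n) (lam : Fin n → ZMod p) : Fin n → ZMod p :=
  fun k => if k = i ∧ ∀ j : Fin n, j < i → lam j = 0 then lam k - 1 else lam k

lemma sigmaInvFun_apply_ne (i : Fin n) (lam : Fin n → ZMod p) {k : Fin n} (h : k ≠ i) :
    sigmaInvFun p n i lam k = lam k := by
  simp [sigmaInvFun, h]

lemma sigmaFun_cond (i : Fin n) (lam : Fin n → ZMod p) :
    (∀ j : Fin n, j < i → sigmaFun p n i lam j = 0) ↔ (∀ j : Fin n, j < i → lam j = 0) := by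
  constructor
  · intro h j hj
    have := h j hj
    rwa [sigmaFun_apply_ne p n i lam (ne_of_lt hj)] at this
  · intro h j hj
    rw [sigmaFun_apply_ne p n i lam (ne_of_lt hj)]
    exact h j hj

lemma sigmaInvFun_cond (i : Fin n) (lam : Fin n → ZMod p) :
    (∀ j : Fin n, j < i → sigmaInvFun p n i lam j = 0) ↔ (∀ j : Fin n, j < i → lam j = 0) := by
  constructor
  · intro h j hj
    have := h j hj
    rwa [sigmaInvFun_apply_ne p n i lam (ne_of_lt hj)] at this
  · intro h j hj
    rw [sigmaInvFun_apply_ne p n i lam (ne_of_lt hj)]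
    exact h j hj

/-- The generator `σ_i` of the Sylow `p`-subgroup of `Sym(F_p^n)`: it fixes
`(λ_0, …, λ_{n-1})` if `λ_j ≠ 0` for some `j < i`, and otherwise replaces the entry
`λ_i` by `λ_i + 1`. -/
def sigmaPerm (i : Fin n) : Equiv.Perm (Fin n → ZMod p) where
  toFun := sigmaFun p n i
  invFun := sigmaInvFun p n i
  left_inv := by
    intro lam
    funext k
    by_cases hk : k = i
    · subst hk
      show sigmaInvFun p n k (sigmaFun p n k lam) k = lam k
      by_cases hc : ∀ j : Fin n, j < k → lam j = 0
      · have hC : ∀ j : Fin n, j < k → sigmaFun p n k lam j = 0 :=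
          (sigmaFun_cond p n k lam).mpr hc
        unfold sigmaInvFun
        rw [if_pos ⟨rfl, hC⟩]
        unfold sigmaFun
        rw [if_pos ⟨rfl, hc⟩]
        ring
      · have hC : ¬ ∀ j : Fin n, j < k → sigmaFun p n k lam j = 0 :=
          fun h => hc ((sigmaFun_cond p n k lam).mp h)
        unfold sigmaInvFun
        rw [if_neg (by tauto)]
        unfold sigmaFun
        rw [if_neg (by tauto)]
    · exact (sigmaInvFun_apply_ne p n i _ hk).trans (sigmaFun_apply_ne p n i lam hk)
  right_inv := by
    intro lam
    funext k
    by_cases hk : k = i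
    · subst hk
      show sigmaFun p n k (sigmaInvFun p n k lam) k = lam k
      by_cases hc : ∀ j : Fin n, j < k → lam j = 0
      · have hC : ∀ j : Fin n, j < k → sigmaInvFun p n k lam j = 0 :=
          (sigmaInvFun_cond p n k lam).mpr hc
        unfold sigmaFun
        rw [if_pos ⟨rfl, hC⟩]
        unfold sigmaInvFun
        rw [if_pos ⟨rfl, hc⟩]
        ring
      · have hC : ¬ ∀ j : Fin n, j < k → sigmaInvFun p n k lam j = 0 :=
          fun h => hc ((sigmaInvFun_cond p n k lam).mp h)
        unfold sigmaFun
        rw [if_neg (by tauto)]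
        unfold sigmaInvFun
        rw [if_neg (by tauto)]
    · exact (sigmaFun_apply_ne p n i _ hk).trans (sigmaInvFun_apply_ne p n i lam hk)

/-- `P_n = ⟨σ_0, …, σ_{n-1}⟩`, a Sylow `p`-subgroup of `Sym(F_p^n)`. -/
def PSyl : Subgroup (Equiv.Perm (Fin n → ZMod p)) :=
  Subgroup.closure (Set.range (sigmaPerm p n))


/-- Weir's filtration subgroup `T_j`: the normal closure in `P_n` of
`⟨σ_j, …, σ_{n-1}⟩`, i.e. the subgroup generated by all `P_n`-conjugates of the
`σ_i` with `i ≥ j`. -/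
def TFilt (j : ℕ) : Subgroup (Equiv.Perm (Fin n → ZMod p)) :=
  Subgroup.closure
    {x | ∃ g ∈ PSyl p n, ∃ i : Fin n, j ≤ (i : ℕ) ∧ x = g * sigmaPerm p n i * g⁻¹}

theorem Equiv.Perm.apply_inv_self {α : Type*} (f : Equiv.Perm α) (x : α) : f (f⁻¹ x) = x :=
  f.apply_symm_apply x

theorem Equiv.Perm.inv_apply_self {α : Type*} (f : Equiv.Perm α) (x : α) : f⁻¹ (f x) = x :=
  f.symm_apply_apply x

namespace Weir

section Basic
variable {p n : ℕ}

/-- Agreement on the first `k` coordinates. -/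
def agr (k : ℕ) (a b : Fin n → ZMod p) : Prop := ∀ i : Fin n, (i : ℕ) < k → a i = b i

lemma agr_rfl (k : ℕ) (a : Fin n → ZMod p) : agr k a a := fun _ _ => rfl

lemma agr_symm {k : ℕ} {a b : Fin n → ZMod p} (h : agr k a b) : agr k b a :=
  fun i hi => (h i hi).symm

lemma agr_trans {k : ℕ} {a b c : Fin n → ZMod p} (h1 : agr k a b) (h2 : agr k b c) :
    agr k a c := fun i hi => (h1 i hi).trans (h2 i hi)

lemma agr_mono {k k' : ℕ} (hk : k' ≤ k) {a b : Fin n → ZMod p} (h : agr k a b) :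
    agr k' a b := fun i hi => h i (lt_of_lt_of_le hi hk)

lemma sigmaFun_eq_of_not {i : Fin n} {lam : Fin n → ZMod p}
    (hc : ¬ ∀ j : Fin n, j < i → lam j = 0) : sigmaFun p n i lam = lam := by
  funext k
  unfold sigmaFun
  rw [if_neg (by tauto)]

lemma sigmaFun_apply_self {i : Fin n} {lam : Fin n → ZMod p}
    (hc : ∀ j : Fin n, j < i → lam j = 0) : sigmaFun p n i lam i = lam i + 1 := by
  unfold sigmaFun
  rw [if_pos ⟨rfl, hc⟩]

lemma sigmaInvFun_eq_of_not {i : Fin n} {lam : Fin n → ZMod p}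
    (hc : ¬ ∀ j : Fin n, j < i → lam j = 0) : sigmaInvFun p n i lam = lam := by
  funext k
  unfold sigmaInvFun
  rw [if_neg (by tauto)]

lemma sigmaPerm_apply (i : Fin n) (lam : Fin n → ZMod p) :
    sigmaPerm p n i lam = sigmaFun p n i lam := rfl

lemma sigmaPerm_inv_apply (i : Fin n) (lam : Fin n → ZMod p) :
    (sigmaPerm p n i)⁻¹ lam = sigmaInvFun p n i lam := rfl

/-- The subgroup of permutations fixing the first `k` coordinates of every point. -/
def Stb (k : ℕ) : Subgroup (Equiv.Perm (Fin n → ZMod p)) where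
  carrier := {g | ∀ lam, agr k (g lam) lam}
  one_mem' := fun lam => agr_rfl k lam
  mul_mem' := by
    intro a b ha hb lam
    have h1 : agr k (a (b lam)) (b lam) := ha (b lam)
    have h2 : agr k (b lam) lam := hb lam
    intro i hi
    rw [Equiv.Perm.mul_apply]
    exact (h1 i hi).trans (h2 i hi)
  inv_mem' := by
    intro a ha lam
    have := ha (a⁻¹ lam)
    rw [Equiv.Perm.apply_inv_self] at this
    exact agr_symm this

lemma mem_Stb {k : ℕ} {g : Equiv.Perm (Fin n → ZMod p)} :
    g ∈ (Stb k : Subgroup (Equiv.Perm (Fin n → ZMod p))) ↔ ∀ lam, agr k (g lam) lam :=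
  Iff.rfl

lemma Stb_mono {k k' : ℕ} (h : k' ≤ k) :
    (Stb k : Subgroup (Equiv.Perm (Fin n → ZMod p))) ≤ Stb k' :=
  fun _ hg lam => agr_mono h (hg lam)

/-- The subgroup of "regular" permutations: they permute the level-`k` blocks for
every `k`, and act on coordinate `k` within each block by a constant shift. -/
def Reg : Subgroup (Equiv.Perm (Fin n → ZMod p)) where
  carrier := {g | (∀ (k : ℕ) (a b : Fin n → ZMod p), agr k a b ↔ agr k (g a) (g b)) ∧
    ∀ (k : Fin n) (a b : Fin n → ZMod p), agr (k : ℕ) a b → g a k - a k = g b k - b k}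
  one_mem' := ⟨fun _ _ _ => Iff.rfl, fun _ _ _ _ => by simp⟩
  mul_mem' := by
    intro x y hx hy
    constructor
    · intro k a b
      rw [hy.1 k a b, hx.1 k (y a) (y b)]
      rfl
    · intro k a b h
      have h1 : agr (k : ℕ) (y a) (y b) := (hy.1 _ a b).mp h
      have h2 := hx.2 k (y a) (y b) h1
      have h3 := hy.2 k a b h
      simp only [Equiv.Perm.mul_apply]
      linear_combination h2 + h3
  inv_mem' := by
    intro x hx
    constructor
    · intro k a b
      have := hx.1 k (x⁻¹ a) (x⁻¹ b)
      rw [Equiv.Perm.apply_inv_self, Equiv.Perm.apply_inv_self] at this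
      exact this.symm
    · intro k a b h
      have h1 : agr (k : ℕ) (x⁻¹ a) (x⁻¹ b) := by
        have := hx.1 (k : ℕ) (x⁻¹ a) (x⁻¹ b)
        rw [Equiv.Perm.apply_inv_self, Equiv.Perm.apply_inv_self] at this
        exact this.mpr h
      have h2 := hx.2 k (x⁻¹ a) (x⁻¹ b) h1
      rw [Equiv.Perm.apply_inv_self, Equiv.Perm.apply_inv_self] at h2
      linear_combination -h2

lemma Reg_agr_fwd {g : Equiv.Perm (Fin n → ZMod p)} (hg : g ∈ (Reg : Subgroup _))
    {k : ℕ} {a b : Fin n → ZMod p} (h : agr k a b) : agr k (g a) (g b) :=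
  (hg.1 k a b).mp h

lemma Reg_agr_bwd {g : Equiv.Perm (Fin n → ZMod p)} (hg : g ∈ (Reg : Subgroup _))
    {k : ℕ} {a b : Fin n → ZMod p} (h : agr k (g a) (g b)) : agr k a b :=
  (hg.1 k a b).mpr h

lemma Reg_shift {g : Equiv.Perm (Fin n → ZMod p)} (hg : g ∈ (Reg : Subgroup _))
    {k : Fin n} {a b : Fin n → ZMod p} (h : agr (k : ℕ) a b) :
    g a k - a k = g b k - b k := hg.2 k a b h

lemma agr_sigmaFun (i : Fin n) {k : ℕ} {a b : Fin n → ZMod p} (h : agr k a b) :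
    agr k (sigmaFun p n i a) (sigmaFun p n i b) := by
  intro i' hi'
  by_cases hii : i' = i
  · subst hii
    have hC : (∀ j : Fin n, j < i' → a j = 0) ↔ (∀ j : Fin n, j < i' → b j = 0) := by
      constructor <;> intro hz j hj
      · rw [← h j (lt_trans (Fin.lt_def.mp hj) hi')]; exact hz j hj
      · rw [h j (lt_trans (Fin.lt_def.mp hj) hi')]; exact hz j hj
    by_cases hc : ∀ j : Fin n, j < i' → a j = 0
    · rw [sigmaFun_apply_self hc, sigmaFun_apply_self (hC.mp hc), h i' hi']
    · rw [sigmaFun_eq_of_not hc, sigmaFun_eq_of_not (fun hb => hc (hC.mpr hb))]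
      exact h i' hi'
  · rw [sigmaFun_apply_ne p n i a hii, sigmaFun_apply_ne p n i b hii]
    exact h i' hi'

lemma agr_sigmaInvFun (i : Fin n) {k : ℕ} {a b : Fin n → ZMod p} (h : agr k a b) :
    agr k (sigmaInvFun p n i a) (sigmaInvFun p n i b) := by
  intro i' hi'
  by_cases hii : i' = i
  · subst hii
    have hC : (∀ j : Fin n, j < i' → a j = 0) ↔ (∀ j : Fin n, j < i' → b j = 0) := by
      constructor <;> intro hz j hj
      · rw [← h j (lt_trans (Fin.lt_def.mp hj) hi')]; exact hz j hj
      · rw [h j (lt_trans (Fin.lt_def.mp hj) hi')]; exact hz j hj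
    by_cases hc : ∀ j : Fin n, j < i' → a j = 0
    · unfold sigmaInvFun
      rw [if_pos ⟨rfl, hc⟩, if_pos ⟨rfl, hC.mp hc⟩, h i' hi']
    · rw [sigmaInvFun_eq_of_not hc, sigmaInvFun_eq_of_not (fun hb => hc (hC.mpr hb))]
      exact h i' hi'
  · rw [sigmaInvFun_apply_ne p n i a hii, sigmaInvFun_apply_ne p n i b hii]
    exact h i' hi'

lemma sigma_mem_Reg (i : Fin n) : sigmaPerm p n i ∈ (Reg : Subgroup _) := by
  constructor
  · intro k a b
    constructor
    · exact agr_sigmaFun i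
    · intro h
      have h2 := agr_sigmaInvFun (p := p) (n := n) i h
      have e1 : sigmaInvFun p n i (sigmaPerm p n i a) = a := (sigmaPerm p n i).left_inv a
      have e2 : sigmaInvFun p n i (sigmaPerm p n i b) = b := (sigmaPerm p n i).left_inv b
      rwa [show (sigmaPerm p n i a) = sigmaFun p n i a from rfl,
        show (sigmaPerm p n i b) = sigmaFun p n i b from rfl, ← sigmaPerm_apply,
        ← sigmaPerm_apply, e1, e2] at h2
  · intro k a b h
    show sigmaFun p n i a k - a k = sigmaFun p n i b k - b k
    by_cases hk : k = i
    · subst hk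
      by_cases hc : ∀ j : Fin n, j < k → a j = 0
      · have hcb : ∀ j : Fin n, j < k → b j = 0 := fun j hj => by
          rw [← h j (Fin.lt_def.mp hj)]; exact hc j hj
        rw [sigmaFun_apply_self hc, sigmaFun_apply_self hcb]
        ring
      · have hcb : ¬ ∀ j : Fin n, j < k → b j = 0 := fun hb =>
          hc (fun j hj => by rw [h j (Fin.lt_def.mp hj)]; exact hb j hj)
        rw [sigmaFun_eq_of_not hc, sigmaFun_eq_of_not hcb]
        simp
    · rw [sigmaFun_apply_ne p n i a hk, sigmaFun_apply_ne p n i b hk]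
      simp

lemma PSyl_le_Reg : PSyl p n ≤ (Reg : Subgroup _) := by
  rw [PSyl]
  exact (Subgroup.closure_le _).mpr (by rintro x ⟨i, rfl⟩; exact sigma_mem_Reg i)

lemma sigma_mem_Stb {i : Fin n} {k : ℕ} (h : k ≤ (i : ℕ)) :
    sigmaPerm p n i ∈ (Stb k : Subgroup _) := by
  intro lam i' hi'
  have hne : i' ≠ i := by
    intro e
    rw [e] at hi'
    omega
  exact sigmaFun_apply_ne p n i lam hne

lemma sigma_mem_PSyl (i : Fin n) : sigmaPerm p n i ∈ PSyl p n :=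
  Subgroup.subset_closure ⟨i, rfl⟩

lemma TFilt_le_PSyl (k : ℕ) : TFilt p n k ≤ PSyl p n := by
  rw [TFilt]
  refine (Subgroup.closure_le _).mpr ?_
  rintro x ⟨g, hg, i, _, rfl⟩
  exact mul_mem (mul_mem hg (sigma_mem_PSyl i)) (inv_mem hg)

lemma TFilt_le_Stb (k : ℕ) : TFilt p n k ≤ (Stb k : Subgroup _) := by
  rw [TFilt]
  refine (Subgroup.closure_le _).mpr ?_
  rintro x ⟨g, hg, i, hik, rfl⟩
  intro lam
  have hgR := PSyl_le_Reg hg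
  have h1 : agr k (sigmaPerm p n i (g⁻¹ lam)) (g⁻¹ lam) := sigma_mem_Stb hik (g⁻¹ lam)
  have h2 := Reg_agr_fwd hgR h1
  rw [Equiv.Perm.apply_inv_self] at h2
  intro i' hi'
  simpa [Equiv.Perm.mul_apply] using h2 i' hi'

lemma TFilt_le_Reg (k : ℕ) : TFilt p n k ≤ (Reg : Subgroup _) :=
  le_trans (TFilt_le_PSyl k) PSyl_le_Reg

lemma TFilt_conj {k : ℕ} {h x : Equiv.Perm (Fin n → ZMod p)} (hh : h ∈ PSyl p n)
    (hx : x ∈ TFilt p n k) : h * x * h⁻¹ ∈ TFilt p n k := by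
  refine Subgroup.closure_induction (p := fun y _ => h * y * h⁻¹ ∈ TFilt p n k)
    ?_ ?_ ?_ ?_ hx
  · rintro y ⟨g, hg, i, hik, rfl⟩
    exact Subgroup.subset_closure ⟨h * g, mul_mem hh hg, i, hik, by group⟩
  · simpa using one_mem (TFilt p n k)
  · intro a b _ _ ha hb
    have e : h * (a * b) * h⁻¹ = (h * a * h⁻¹) * (h * b * h⁻¹) := by group
    rw [e]; exact mul_mem ha hb
  · intro a _ ha
    have e : h * a⁻¹ * h⁻¹ = (h * a * h⁻¹)⁻¹ := by group
    rw [e]; exact inv_mem ha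

/-- Permutations fixing all coordinates `≥ k`. -/
def Ufx (k : ℕ) : Subgroup (Equiv.Perm (Fin n → ZMod p)) where
  carrier := {g | ∀ lam (i : Fin n), k ≤ (i : ℕ) → g lam i = lam i}
  one_mem' := fun _ _ _ => rfl
  mul_mem' := by
    intro a b ha hb lam i hi
    rw [Equiv.Perm.mul_apply, ha (b lam) i hi, hb lam i hi]
  inv_mem' := by
    intro a ha lam i hi
    have := ha (a⁻¹ lam) i hi
    rw [Equiv.Perm.apply_inv_self] at this
    exact this.symm

def Vk (k : ℕ) : Subgroup (Equiv.Perm (Fin n → ZMod p)) :=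
  Subgroup.closure {x | ∃ i : Fin n, (i : ℕ) < k ∧ x = sigmaPerm p n i}

lemma Vk_le_PSyl (k : ℕ) : (Vk k : Subgroup (Equiv.Perm (Fin n → ZMod p))) ≤ PSyl p n :=
  (Subgroup.closure_le _).mpr (by rintro x ⟨i, _, rfl⟩; exact sigma_mem_PSyl i)

lemma Vk_le_Ufx (k : ℕ) : (Vk k : Subgroup (Equiv.Perm (Fin n → ZMod p))) ≤ Ufx k := by
  refine (Subgroup.closure_le _).mpr ?_
  rintro x ⟨i, hik, rfl⟩
  intro lam i' hi'
  have hne : i' ≠ i := by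
    intro e; rw [e] at hi'; omega
  exact sigmaFun_apply_ne p n i lam hne

lemma decompVT (k : ℕ) {g : Equiv.Perm (Fin n → ZMod p)} (hg : g ∈ PSyl p n) :
    ∃ w ∈ (Vk k : Subgroup (Equiv.Perm (Fin n → ZMod p))), ∃ t ∈ TFilt p n k, g = w * t := by
  refine Subgroup.closure_induction
    (p := fun y _ => ∃ w ∈ (Vk k : Subgroup (Equiv.Perm (Fin n → ZMod p))),
      ∃ t ∈ TFilt p n k, y = w * t) ?_ ?_ ?_ ?_ hg
  · rintro y ⟨i, rfl⟩
    by_cases hik : (i : ℕ) < k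
    · exact ⟨sigmaPerm p n i, Subgroup.subset_closure ⟨i, hik, rfl⟩, 1, one_mem _,
        (mul_one _).symm⟩
    · refine ⟨1, one_mem _, sigmaPerm p n i,
        Subgroup.subset_closure ⟨1, one_mem _, i, le_of_not_gt hik, by group⟩,
        (one_mul _).symm⟩
  · exact ⟨1, one_mem _, 1, one_mem _, (one_mul _).symm⟩
  · rintro a b _ _ ⟨w1, hw1, t1, ht1, rfl⟩ ⟨w2, hw2, t2, ht2, rfl⟩
    refine ⟨w1 * w2, mul_mem hw1 hw2, (w2⁻¹ * t1 * w2) * t2,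
      mul_mem ?_ ht2, by group⟩
    have := TFilt_conj (inv_mem (Vk_le_PSyl k hw2)) ht1
    simpa using this
  · rintro a _ ⟨w, hw, t, ht, rfl⟩
    refine ⟨w⁻¹, inv_mem hw, w * t⁻¹ * w⁻¹, TFilt_conj (Vk_le_PSyl k hw) (inv_mem ht),
      by group⟩

lemma mem_TFilt_of_stb {k : ℕ} {g : Equiv.Perm (Fin n → ZMod p)} (hg : g ∈ PSyl p n)
    (hs : g ∈ (Stb k : Subgroup _)) : g ∈ TFilt p n k := by
  obtain ⟨w, hw, t, ht, rfl⟩ := decompVT k hg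
  have htS : t ∈ (Stb k : Subgroup _) := TFilt_le_Stb k ht
  have hwS : w ∈ (Stb k : Subgroup _) := by
    have := mul_mem hs (inv_mem htS)
    simpa using this
  have hwU : w ∈ (Ufx k : Subgroup (Equiv.Perm (Fin n → ZMod p))) := Vk_le_Ufx k hw
  have hw1 : w = 1 := by
    apply Equiv.ext
    intro lam
    funext i
    rcases lt_or_ge (i : ℕ) k with h | h
    · exact hwS lam i h
    · exact hwU lam i h
  rw [hw1, one_mul]
  exact ht

end Basic
end Weir
namespace Weir

section Supp
variable {p n : ℕ}

/-- `g` is supported inside `s`. -/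
def supIn (g : Equiv.Perm (Fin n → ZMod p)) (s : Set (Fin n → ZMod p)) : Prop :=
  ∀ lam, lam ∉ s → g lam = lam

lemma supIn_one (s : Set (Fin n → ZMod p)) : supIn (1 : Equiv.Perm (Fin n → ZMod p)) s := fun _ _ => rfl

lemma supIn_mul {g h : Equiv.Perm (Fin n → ZMod p)} {s : Set (Fin n → ZMod p)}
    (hg : supIn g s) (hh : supIn h s) : supIn (g * h) s := by
  intro lam hl
  rw [Equiv.Perm.mul_apply, hh lam hl, hg lam hl]

lemma supIn_inv {g : Equiv.Perm (Fin n → ZMod p)} {s : Set (Fin n → ZMod p)}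
    (hg : supIn g s) : supIn g⁻¹ s := by
  intro lam hl
  have := hg lam hl
  conv_lhs => rw [← this]
  exact Equiv.Perm.inv_apply_self g lam

lemma supIn_mono {g : Equiv.Perm (Fin n → ZMod p)} {s t : Set (Fin n → ZMod p)}
    (hst : s ⊆ t) (hg : supIn g s) : supIn g t := fun lam hl => hg lam (fun h => hl (hst h))

lemma supIn_apply_mem {g : Equiv.Perm (Fin n → ZMod p)} {s : Set (Fin n → ZMod p)}
    (hg : supIn g s) {lam} (hl : lam ∈ s) (h2 : g lam ∉ s) : g lam = lam := by
  have := hg (g lam) h2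
  exact g.injective this

lemma supIn_comm {g h : Equiv.Perm (Fin n → ZMod p)} {s t : Set (Fin n → ZMod p)}
    (hg : supIn g s) (hh : supIn h t) (hst : ∀ x, x ∈ s → x ∉ t) : g * h = h * g := by
  apply Equiv.ext
  intro lam
  simp only [Equiv.Perm.mul_apply]
  by_cases hls : lam ∈ s
  · have hlt : lam ∉ t := hst lam hls
    rw [hh lam hlt]
    by_cases hgs : g lam ∈ s
    · exact (hh (g lam) (hst _ hgs)).symm
    · rw [supIn_apply_mem hg hls hgs, hh lam hlt]
  · by_cases hlt : lam ∈ t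
    · rw [hg lam hls]
      by_cases hht : h lam ∈ t
      · exact hg (h lam) (fun hc => (hst _ hc) hht)
      · rw [supIn_apply_mem hh hlt hht, hg lam hls]
    · rw [hh lam hlt, hg lam hls, hh lam hlt]

lemma supIn_conj {g h : Equiv.Perm (Fin n → ZMod p)} {s : Set (Fin n → ZMod p)}
    (hg : supIn g s) : supIn (h * g * h⁻¹) ((h : Equiv.Perm _) '' s) := by
  intro lam hl
  have h1 : h⁻¹ lam ∉ s := by
    intro hc
    exact hl ⟨h⁻¹ lam, hc, Equiv.Perm.apply_inv_self h lam⟩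
  simp only [Equiv.Perm.mul_apply]
  rw [hg _ h1, Equiv.Perm.apply_inv_self]

lemma supIn_empty_eq_one {g : Equiv.Perm (Fin n → ZMod p)}
    (hg : supIn g (∅ : Set (Fin n → ZMod p))) : g = 1 :=
  Equiv.ext fun lam => hg lam (Set.notMem_empty lam)

lemma supIn_singleton_eq_one {g : Equiv.Perm (Fin n → ZMod p)} {a : Fin n → ZMod p}
    (hg : supIn g {a}) : g = 1 := by
  apply Equiv.ext
  intro lam
  by_cases h : lam = a
  · subst h
    by_cases h2 : g lam = lam
    · simpa using h2
    · have : g lam ∉ ({lam} : Set (Fin n → ZMod p)) := by simpa using h2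
      simpa using supIn_apply_mem hg rfl this
  · simpa using hg lam (by simpa using h)

/-- The level-`k` block of `β`. -/
def BlkS (k : ℕ) (β : Fin n → ZMod p) : Set (Fin n → ZMod p) := {lam | agr k lam β}

lemma BlkS_mono {k k' : ℕ} (h : k' ≤ k) (β : Fin n → ZMod p) : BlkS k β ⊆ BlkS k' β :=
  fun _ hl => agr_mono h hl

/-- Displacement of coordinate `k`. -/
def dsh (g : Equiv.Perm (Fin n → ZMod p)) (k : Fin n) (lam : Fin n → ZMod p) : ZMod p :=
  g lam k - lam k

/-- The canonical representative of the level-`k` block of `lam`. -/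
def rp (k : ℕ) (lam : Fin n → ZMod p) : Fin n → ZMod p :=
  fun i => if (i : ℕ) < k then lam i else 0

lemma agr_rp (k : ℕ) (lam : Fin n → ZMod p) : agr k (rp k lam) lam := by
  intro i hi
  simp [rp, hi]

lemma rp_eq_of_agr {k : ℕ} {a b : Fin n → ZMod p} (h : agr k a b) : rp k a = rp k b := by
  funext i
  by_cases hi : (i : ℕ) < k <;> simp [rp, hi]
  exact h i hi

lemma rp_eq_self {k : ℕ} {a : Fin n → ZMod p} (h : ∀ i : Fin n, k ≤ (i : ℕ) → a i = 0) :
    rp k a = a := by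
  funext i
  by_cases hi : (i : ℕ) < k <;> simp [rp, hi]
  exact (h i (le_of_not_gt hi)).symm

end Supp
end Weir
namespace Weir

section Psi
variable {p n : ℕ}

open Classical in
/-- Representatives of the level-`k` sub-blocks of the level-`jj` block of `β`. -/
noncomputable def blkRep [NeZero p] (jj : ℕ) (k : Fin n) (β : Fin n → ZMod p) :
    Finset (Fin n → ZMod p) :=
  Finset.univ.filter (fun lam => agr jj lam β ∧ ∀ i : Fin n, (k : ℕ) ≤ (i : ℕ) → lam i = 0)

lemma mem_blkRep [NeZero p] {jj : ℕ} {k : Fin n} {β lam : Fin n → ZMod p} :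
    lam ∈ blkRep jj k β ↔
      agr jj lam β ∧ ∀ i : Fin n, (k : ℕ) ≤ (i : ℕ) → lam i = 0 := by
  simp [blkRep]

/-- The sum of the coordinate-`k` displacements of `g` over all level-`k` sub-blocks
of the level-`jj` block of `β`. -/
noncomputable def psi [NeZero p] (g : Equiv.Perm (Fin n → ZMod p)) (jj : ℕ) (k : Fin n)
    (β : Fin n → ZMod p) : ZMod p :=
  ∑ lam ∈ blkRep jj k β, dsh g k lam

lemma psi_mul [NeZero p] {jj : ℕ} {k : Fin n} (hjk : jj ≤ (k : ℕ))
    {g h : Equiv.Perm (Fin n → ZMod p)} (hgR : g ∈ (Reg : Subgroup _))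
    (hhR : h ∈ (Reg : Subgroup _)) (hhS : h ∈ (Stb jj : Subgroup _))
    (β : Fin n → ZMod p) :
    psi (g * h) jj k β = psi g jj k β + psi h jj k β := by
  unfold psi
  have hsplit : ∀ lam, dsh (g * h) k lam = dsh g k (h lam) + dsh h k lam := by
    intro lam
    simp only [dsh, Equiv.Perm.mul_apply]
    ring
  rw [Finset.sum_congr rfl (fun lam _ => hsplit lam), Finset.sum_add_distrib]
  congr 1
  have hhS' : h⁻¹ ∈ (Stb jj : Subgroup (Equiv.Perm (Fin n → ZMod p))) := inv_mem hhS
  refine Finset.sum_nbij' (fun lam => rp (k : ℕ) (h lam)) (fun lam => rp (k : ℕ) (h⁻¹ lam))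
    ?_ ?_ ?_ ?_ ?_
  · intro a ha
    rw [mem_blkRep] at ha ⊢
    constructor
    · intro i hi
      have : (i : ℕ) < (k : ℕ) := lt_of_lt_of_le hi hjk
      simp only [rp, if_pos this]
      rw [hhS (a) i hi]
      exact ha.1 i hi
    · intro i hi
      simp [rp, Nat.not_lt.mpr hi]
  · intro a ha
    rw [mem_blkRep] at ha ⊢
    constructor
    · intro i hi
      have : (i : ℕ) < (k : ℕ) := lt_of_lt_of_le hi hjk
      simp only [rp, if_pos this]
      rw [hhS' (a) i hi]
      exact ha.1 i hi
    · intro i hi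
      simp [rp, Nat.not_lt.mpr hi]
  · intro a ha
    rw [mem_blkRep] at ha
    have e1 : agr (k : ℕ) (rp (k : ℕ) (h a)) (h a) := agr_rp _ _
    have e2 := Reg_agr_fwd (inv_mem hhR) e1
    rw [Equiv.Perm.inv_apply_self] at e2
    show rp (k : ℕ) (h⁻¹ (rp (k : ℕ) (h a))) = a
    rw [rp_eq_of_agr e2]
    exact rp_eq_self ha.2
  · intro a ha
    rw [mem_blkRep] at ha
    have e1 : agr (k : ℕ) (rp (k : ℕ) (h⁻¹ a)) (h⁻¹ a) := agr_rp _ _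
    have e2 := Reg_agr_fwd hhR e1
    rw [Equiv.Perm.apply_inv_self] at e2
    show rp (k : ℕ) (h (rp (k : ℕ) (h⁻¹ a))) = a
    rw [rp_eq_of_agr e2]
    exact rp_eq_self ha.2
  · intro a _
    exact Reg_shift hgR (agr_symm (agr_rp _ _))

lemma psi_one [NeZero p] {jj : ℕ} {k : Fin n} (β : Fin n → ZMod p) :
    psi (1 : Equiv.Perm (Fin n → ZMod p)) jj k β = 0 := by
  unfold psi
  refine Finset.sum_eq_zero fun lam _ => ?_
  simp [dsh]

lemma psi_inv [NeZero p] {jj : ℕ} {k : Fin n} (hjk : jj ≤ (k : ℕ))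
    {g : Equiv.Perm (Fin n → ZMod p)} (hgR : g ∈ (Reg : Subgroup _))
    (hgS : g ∈ (Stb jj : Subgroup _)) (β : Fin n → ZMod p) :
    psi g⁻¹ jj k β = - psi g jj k β := by
  have h := psi_mul hjk (inv_mem hgR) hgR hgS β
  rw [inv_mul_cancel, psi_one] at h
  exact eq_neg_of_add_eq_zero_left h.symm

lemma psi_conj [NeZero p] {jj : ℕ} {k : Fin n} (hjk : jj ≤ (k : ℕ))
    {g w : Equiv.Perm (Fin n → ZMod p)} (hgR : g ∈ (Reg : Subgroup _))
    (hgS : g ∈ (Stb jj : Subgroup _)) (hwR : w ∈ (Reg : Subgroup _))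
    (hwS : w ∈ (Stb jj : Subgroup _)) (β : Fin n → ZMod p) :
    psi (w * g * w⁻¹) jj k β = psi g jj k β := by
  rw [psi_mul hjk (mul_mem hwR hgR) (inv_mem hwR) (inv_mem hwS) β,
    psi_mul hjk hwR hgR hgS β, psi_inv hjk hwR hwS β]
  ring

lemma psi_congr_prefix [NeZero p] {jj : ℕ} {k : Fin n} {β β' : Fin n → ZMod p}
    (h : agr jj β β') (g : Equiv.Perm (Fin n → ZMod p)) :
    psi g jj k β = psi g jj k β' := by
  unfold psi
  congr 1
  apply Finset.ext
  intro lam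
  rw [mem_blkRep, mem_blkRep]
  constructor
  · rintro ⟨h1, h2⟩
    exact ⟨agr_trans h1 h, h2⟩
  · rintro ⟨h1, h2⟩
    exact ⟨agr_trans h1 (agr_symm h), h2⟩

lemma psi_level [NeZero p] {jj jj' : ℕ} {k : Fin n} (hj : jj ≤ jj')
    {g : Equiv.Perm (Fin n → ZMod p)} {β : Fin n → ZMod p}
    (hsup : supIn g (BlkS jj' β)) :
    psi g jj k β = psi g jj' k β := by
  unfold psi
  refine (Finset.sum_subset ?_ ?_).symm
  · intro lam hl
    rw [mem_blkRep] at hl ⊢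
    exact ⟨agr_mono hj hl.1, hl.2⟩
  · intro lam hl hl2
    rw [mem_blkRep] at hl hl2
    push_neg at hl2
    by_cases ha : agr jj' lam β
    · rcases hl2 ha with ⟨i, hi, hne⟩
      exact absurd (hl.2 i hi) hne
    · have := hsup lam ha
      simp [dsh, this]

lemma psi_single [NeZero p] {m : ℕ} (hm : m < n) (g : Equiv.Perm (Fin n → ZMod p))
    (β : Fin n → ZMod p) :
    psi g m ⟨m, hm⟩ β = dsh g ⟨m, hm⟩ (rp m β) := by
  unfold psi
  have : blkRep (p := p) m ⟨m, hm⟩ β = {rp m β} := by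
    apply Finset.ext
    intro lam
    rw [mem_blkRep, Finset.mem_singleton]
    constructor
    · rintro ⟨h1, h2⟩
      funext i
      by_cases hi : (i : ℕ) < m
      · rw [rp, if_pos hi]; exact h1 i hi
      · rw [rp, if_neg hi]; exact h2 i (le_of_not_gt hi)
    · rintro rfl
      exact ⟨agr_rp _ _, fun i hi => by simp [rp, Nat.not_lt.mpr hi]⟩
  rw [this, Finset.sum_singleton]

lemma stb_succ {m : ℕ} (hm : m < n) {γ : Fin n → ZMod p}
    {g : Equiv.Perm (Fin n → ZMod p)} (hgR : g ∈ (Reg : Subgroup _))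
    (hsup : supIn g (BlkS m γ)) (hd : dsh g ⟨m, hm⟩ (rp m γ) = 0) :
    g ∈ (Stb (m + 1) : Subgroup _) := by
  intro lam i hi
  by_cases hb : agr m lam γ
  · have hgl : agr m (g lam) γ := by
      by_cases hcc : g lam ∈ BlkS m γ
      · exact hcc
      · rw [supIn_apply_mem hsup hb hcc]; exact hb
    rcases Nat.lt_succ_iff_lt_or_eq.mp hi with him | him
    · exact (hgl i him).trans (hb i him).symm
    · have hieq : i = ⟨m, hm⟩ := Fin.ext him
      subst hieq
      have hagr : agr m lam (rp m γ) := agr_trans hb (agr_symm (agr_rp _ _))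
      have h5 := Reg_shift hgR (k := ⟨m, hm⟩) hagr
      unfold dsh at hd
      rw [hd] at h5
      exact sub_eq_zero.mp h5
  · rw [hsup lam hb]

lemma conj_stb_succ {m : ℕ} {a w : Equiv.Perm (Fin n → ZMod p)}
    (ha : a ∈ (Stb (m + 1) : Subgroup _)) (hwR : w ∈ (Reg : Subgroup _))
    (hwS : w ∈ (Stb m : Subgroup _)) :
    w⁻¹ * a * w ∈ (Stb (m + 1) : Subgroup _) := by
  intro lam i hi
  have h1 : agr (m + 1) (a (w lam)) (w lam) := ha (w lam)
  have hagr : agr m (a (w lam)) (w lam) := agr_mono (Nat.le_succ m) h1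
  rcases Nat.lt_succ_iff_lt_or_eq.mp hi with him | him
  · have h2 := Reg_agr_fwd (inv_mem hwR) hagr
    rw [Equiv.Perm.inv_apply_self] at h2
    simpa [Equiv.Perm.mul_apply] using h2 i him
  · have hsh := Reg_shift (inv_mem hwR) (k := i) (by
      intro i' hi'
      exact hagr i' (by omega))
    have h2 : a (w lam) i = w lam i := h1 i hi
    have h3 : w⁻¹ (w lam) = lam := Equiv.Perm.inv_apply_self w lam
    simp only [Equiv.Perm.mul_apply]
    rw [h3] at hsh
    linear_combination hsh + h2

end Psi
end Weir
namespace Weir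

section Res
variable {p n : ℕ}

open Classical in
/-- Restriction of `g ∈ Stb k` to the level-`k` block of `β` (identity elsewhere). -/
noncomputable def resB (k : ℕ) (β : Fin n → ZMod p) (g : Equiv.Perm (Fin n → ZMod p))
    (hg : g ∈ (Stb k : Subgroup (Equiv.Perm (Fin n → ZMod p)))) :
    Equiv.Perm (Fin n → ZMod p) where
  toFun lam := if agr k lam β then g lam else lam
  invFun lam := if agr k lam β then g⁻¹ lam else lam
  left_inv := by
    intro lam
    by_cases h : agr k lam β
    · have h2 : agr k (g lam) β := agr_trans (hg lam) h
      simp only [if_pos h, if_pos h2, Equiv.Perm.inv_apply_self]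
    · simp only [if_neg h]
  right_inv := by
    intro lam
    by_cases h : agr k lam β
    · have h2 : agr k (g⁻¹ lam) β := agr_trans (inv_mem hg lam) h
      simp only [if_pos h, if_pos h2, Equiv.Perm.apply_inv_self]
    · simp only [if_neg h]

lemma resB_apply_of {k : ℕ} {β lam : Fin n → ZMod p} {g : Equiv.Perm (Fin n → ZMod p)}
    {hg : g ∈ (Stb k : Subgroup _)} (h : agr k lam β) : resB k β g hg lam = g lam := by
  simp only [resB, Equiv.coe_fn_mk, if_pos h]

lemma resB_apply_of_not {k : ℕ} {β lam : Fin n → ZMod p} {g : Equiv.Perm (Fin n → ZMod p)}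
    {hg : g ∈ (Stb k : Subgroup _)} (h : ¬ agr k lam β) : resB k β g hg lam = lam := by
  simp only [resB, Equiv.coe_fn_mk, if_neg h]

lemma resB_supIn {k : ℕ} {β : Fin n → ZMod p} {g : Equiv.Perm (Fin n → ZMod p)}
    {hg : g ∈ (Stb k : Subgroup _)} : supIn (resB k β g hg) (BlkS k β) :=
  fun _ hl => resB_apply_of_not hl

lemma resB_mul {k : ℕ} {β : Fin n → ZMod p} {g h : Equiv.Perm (Fin n → ZMod p)}
    (hg : g ∈ (Stb k : Subgroup _)) (hh : h ∈ (Stb k : Subgroup _))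
    (hgh : g * h ∈ (Stb k : Subgroup _)) :
    resB k β (g * h) hgh = resB k β g hg * resB k β h hh := by
  apply Equiv.ext
  intro lam
  by_cases hl : agr k lam β
  · have h2 : agr k (h lam) β := agr_trans (hh lam) hl
    rw [Equiv.Perm.mul_apply, resB_apply_of hl, resB_apply_of hl, resB_apply_of h2,
      Equiv.Perm.mul_apply]
  · rw [Equiv.Perm.mul_apply, resB_apply_of_not hl, resB_apply_of_not hl,
      resB_apply_of_not hl]

lemma resB_one {k : ℕ} {β : Fin n → ZMod p} :
    resB k β (1 : Equiv.Perm (Fin n → ZMod p)) (one_mem _) = 1 := by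
  apply Equiv.ext
  intro lam
  by_cases hl : agr k lam β
  · rw [resB_apply_of hl]
  · rw [resB_apply_of_not hl]; rfl

lemma resB_eq_of_eq {k : ℕ} {β : Fin n → ZMod p} {g g' : Equiv.Perm (Fin n → ZMod p)}
    (e : g = g') (hg : g ∈ (Stb k : Subgroup _)) (hg' : g' ∈ (Stb k : Subgroup _)) :
    resB k β g hg = resB k β g' hg' := by subst e; rfl

lemma resB_inv {k : ℕ} {β : Fin n → ZMod p} {g : Equiv.Perm (Fin n → ZMod p)}
    (hg : g ∈ (Stb k : Subgroup _)) (hg' : g⁻¹ ∈ (Stb k : Subgroup _)) :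
    resB k β g⁻¹ hg' = (resB k β g hg)⁻¹ := by
  apply eq_inv_of_mul_eq_one_right
  rw [← resB_mul hg hg' (by rw [mul_inv_cancel]; exact one_mem _)]
  rw [resB_eq_of_eq (mul_inv_cancel g) _ (one_mem _), resB_one]

lemma gen_supIn {g : Equiv.Perm (Fin n → ZMod p)} {i : Fin n} {k : ℕ}
    (hgP : g ∈ PSyl p n) (hik : k ≤ (i : ℕ)) :
    supIn (g * sigmaPerm p n i * g⁻¹) (BlkS k (g (fun _ => 0))) := by
  intro lam hl
  by_cases hc : ∀ j : Fin n, j < i → (g⁻¹ lam) j = 0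
  · exfalso
    apply hl
    have h0 : agr k (g⁻¹ lam) (fun _ => 0) := by
      intro i' hi'
      exact hc i' (Fin.lt_def.mpr (lt_of_lt_of_le hi' hik))
    have := Reg_agr_fwd (PSyl_le_Reg hgP) h0
    rw [Equiv.Perm.apply_inv_self] at this
    exact this
  · simp only [Equiv.Perm.mul_apply]
    rw [show sigmaPerm p n i (g⁻¹ lam) = sigmaFun p n i (g⁻¹ lam) from rfl,
      sigmaFun_eq_of_not hc, Equiv.Perm.apply_inv_self]

lemma resB_mem_TFilt {k : ℕ} {β : Fin n → ZMod p} {g : Equiv.Perm (Fin n → ZMod p)}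
    (hgT : g ∈ TFilt p n k) (hg : g ∈ (Stb k : Subgroup _)) :
    resB k β g hg ∈ TFilt p n k := by
  revert hg
  refine Subgroup.closure_induction
    (p := fun x _ => ∀ (hxs : x ∈ (Stb k : Subgroup _)), resB k β x hxs ∈ TFilt p n k)
    ?_ ?_ ?_ ?_ hgT
  · rintro y ⟨g', hg', i, hik, rfl⟩ hys
    have hsup := gen_supIn hg' hik
    by_cases hb : agr k (g' (fun _ => 0)) β
    · have he : resB k β _ hys = g' * sigmaPerm p n i * g'⁻¹ := by
        apply Equiv.ext
        intro lam
        by_cases hl : agr k lam β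
        · rw [resB_apply_of hl]
        · rw [resB_apply_of_not hl]
          have hnb : lam ∉ BlkS k (g' (fun _ => 0)) := by
            intro hmem
            exact hl (agr_trans hmem hb)
          exact (hsup lam hnb).symm
      rw [he]
      exact Subgroup.subset_closure ⟨g', hg', i, hik, rfl⟩
    · have he : resB k β _ hys = 1 := by
        apply Equiv.ext
        intro lam
        by_cases hl : agr k lam β
        · rw [resB_apply_of hl]
          have hnb : lam ∉ BlkS k (g' (fun _ => 0)) := by
            intro hmem
            exact hb (agr_trans (agr_symm hmem) hl)
          exact hsup lam hnb
        · rw [resB_apply_of_not hl]; rfl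
      rw [he]
      exact one_mem _
  · intro h1
    rw [resB_eq_of_eq rfl h1 (one_mem _), resB_one]
    exact one_mem _
  · intro x y hx hy ihx ihy hxys
    have hxs : x ∈ (Stb k : Subgroup _) := TFilt_le_Stb k hx
    have hys : y ∈ (Stb k : Subgroup _) := TFilt_le_Stb k hy
    rw [resB_mul hxs hys hxys]
    exact mul_mem (ihx hxs) (ihy hys)
  · intro x hx ih hxs
    have hxs' : x ∈ (Stb k : Subgroup _) := TFilt_le_Stb k hx
    rw [resB_inv hxs' hxs]
    exact inv_mem (ih hxs')

lemma psi_resB_same [NeZero p] {jj : ℕ} {k : Fin n} {β β' : Fin n → ZMod p}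
    {g : Equiv.Perm (Fin n → ZMod p)} {hg : g ∈ (Stb jj : Subgroup _)}
    (hbb : agr jj β' β) : psi (resB jj β g hg) jj k β' = psi g jj k β' := by
  unfold psi
  refine Finset.sum_congr rfl fun lam hl => ?_
  rw [mem_blkRep] at hl
  unfold dsh
  rw [resB_apply_of (agr_trans hl.1 hbb)]

lemma psi_resB_other [NeZero p] {jj : ℕ} {k : Fin n} {β β' : Fin n → ZMod p}
    {g : Equiv.Perm (Fin n → ZMod p)} {hg : g ∈ (Stb jj : Subgroup _)}
    (hbb : ¬ agr jj β' β) : psi (resB jj β g hg) jj k β' = 0 := by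
  unfold psi
  refine Finset.sum_eq_zero fun lam hl => ?_
  rw [mem_blkRep] at hl
  unfold dsh
  rw [resB_apply_of_not (fun hc => hbb (agr_trans (agr_symm hl.1) hc))]
  simp

end Res
end Weir
namespace Weir

section Trans
variable {p n : ℕ}

lemma sigma_pow_apply {i : Fin n} (v : ℕ) :
    ∀ (lam : Fin n → ZMod p), (∀ j : Fin n, j < i → lam j = 0) → ∀ i' : Fin n,
      ((sigmaPerm p n i) ^ v) lam i' = if i' = i then lam i' + (v : ZMod p) else lam i' := by
  induction v with
  | zero => intro lam _ i'; simp
  | succ v ih =>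
    intro lam hc i'
    have hpre : ∀ j : Fin n, j < i → (sigmaPerm p n i lam) j = 0 := fun j hj => by
      rw [sigmaPerm_apply, sigmaFun_apply_ne p n i lam (ne_of_lt hj)]
      exact hc j hj
    rw [pow_succ, Equiv.Perm.mul_apply, ih (sigmaPerm p n i lam) hpre i']
    by_cases hi' : i' = i
    · subst hi'
      rw [if_pos rfl, if_pos rfl, sigmaPerm_apply, sigmaFun_apply_self hc]
      push_cast
      ring
    · rw [if_neg hi', if_neg hi', sigmaPerm_apply, sigmaFun_apply_ne p n i lam hi']

lemma exists_trans [NeZero p] (γ : Fin n → ZMod p) :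
    ∃ h ∈ PSyl p n, h (fun _ => 0) = γ := by
  have aux : ∀ t, t ≤ n → ∃ h ∈ PSyl p n, ∀ i : Fin n,
      h (fun _ => 0) i = if n - t ≤ (i : ℕ) then γ i else 0 := by
    intro t
    induction t with
    | zero =>
      intro _
      refine ⟨1, one_mem _, fun i => ?_⟩
      rw [if_neg (by omega), Equiv.Perm.one_apply]
    | succ t ih =>
      intro ht1
      obtain ⟨h, hhP, hh⟩ := ih (by omega)
      have hmn : n - (t + 1) < n := by omega
      set m := n - (t + 1) with hm
      set km : Fin n := ⟨m, hmn⟩ with hkm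
      set v := (γ km).val with hv
      refine ⟨(sigmaPerm p n km) ^ v * h, mul_mem (pow_mem (sigma_mem_PSyl km) v) hhP,
        fun i => ?_⟩
      rw [Equiv.Perm.mul_apply]
      have hkv : (km : ℕ) = m := rfl
      have hpre : ∀ j : Fin n, j < km → (h (fun _ => 0)) j = 0 := by
        intro j hj
        rw [hh j, if_neg]
        have h2 := Fin.lt_def.mp hj
        rw [hkv] at h2
        omega
      rw [sigma_pow_apply v (h (fun _ => 0)) hpre i]
      by_cases hi : i = km
      · subst hi
        rw [if_pos rfl, hh km, if_neg (by rw [hkv]; omega), zero_add, hv,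
          ZMod.natCast_val, ZMod.cast_id, if_pos (by rw [hkv])]
      · have hne : (i : ℕ) ≠ m := fun e => hi (Fin.ext e)
        rw [if_neg hi, hh i]
        by_cases h1 : n - t ≤ (i : ℕ)
        · rw [if_pos h1, if_pos (by omega)]
        · rw [if_neg h1, if_neg (by omega)]
  obtain ⟨h, hhP, hh⟩ := aux n (le_refl n)
  refine ⟨h, hhP, funext fun i => ?_⟩
  rw [hh i, if_pos (by omega)]

lemma exists_mover [NeZero p] {m : ℕ} (hm : m < n) (γ : Fin n → ZMod p) :
    ∃ z, z ∈ TFilt p n m ∧ supIn z (BlkS m γ) ∧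
      ∀ lam, agr m lam γ → z lam ⟨m, hm⟩ = lam ⟨m, hm⟩ + 1 := by
  obtain ⟨h, hhP, hh0⟩ := exists_trans γ
  set km : Fin n := ⟨m, hm⟩ with hkm
  refine ⟨h * sigmaPerm p n km * h⁻¹,
    Subgroup.subset_closure ⟨h, hhP, km, le_refl m, rfl⟩, ?_, ?_⟩
  · have := gen_supIn (i := km) (k := m) hhP (le_refl m)
    rwa [hh0] at this
  · intro lam hl
    have hR := PSyl_le_Reg hhP
    have h1 : agr m lam (h (fun _ => 0)) := by rw [hh0]; exact hl
    have hinv : agr m (h⁻¹ lam) (fun _ => 0) := by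
      apply Reg_agr_bwd hR
      rw [Equiv.Perm.apply_inv_self]
      exact h1
    have hprefix : ∀ j : Fin n, j < km → (h⁻¹ lam) j = 0 := fun j hj =>
      hinv j (Fin.lt_def.mp hj)
    have hs : sigmaPerm p n km (h⁻¹ lam) km = (h⁻¹ lam) km + 1 :=
      sigmaFun_apply_self hprefix
    have hagr2 : agr m (sigmaPerm p n km (h⁻¹ lam)) (h⁻¹ lam) :=
      sigma_mem_Stb (i := km) (k := m) (le_refl m) (h⁻¹ lam)
    have hsh := Reg_shift hR (k := km) hagr2
    rw [Equiv.Perm.apply_inv_self] at hsh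
    simp only [Equiv.Perm.mul_apply]
    linear_combination hsh + hs

lemma dsh_conj {k : Fin n} {x w : Equiv.Perm (Fin n → ZMod p)}
    (hxR : x ∈ (Reg : Subgroup _)) (hxS : x ∈ (Stb ((k : ℕ)) : Subgroup _))
    (hwR : w ∈ (Reg : Subgroup _)) {lam lam0 : Fin n → ZMod p}
    (h : agr (k : ℕ) (w⁻¹ lam) lam0) :
    dsh (w * x * w⁻¹) k lam = dsh x k lam0 := by
  have h1 : agr (k : ℕ) (x (w⁻¹ lam)) (w⁻¹ lam) := hxS (w⁻¹ lam)
  have h2 := Reg_shift hwR h1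
  have h3 := Reg_shift hxR h
  unfold dsh
  simp only [Equiv.Perm.mul_apply]
  rw [Equiv.Perm.apply_inv_self] at h2
  linear_combination h2 + h3

lemma dsh_pow {k : Fin n} {y : Equiv.Perm (Fin n → ZMod p)}
    (hyS : y ∈ (Stb ((k : ℕ)) : Subgroup _)) {β : Fin n → ZMod p} {c : ZMod p}
    (hc : ∀ lam, agr (k : ℕ) lam β → y lam k = lam k + c) (v : ℕ) :
    ∀ lam, agr (k : ℕ) lam β → (y ^ v) lam k = lam k + (v : ZMod p) * c := by
  induction v with
  | zero => intro lam _; simp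
  | succ v ih =>
    intro lam hl
    have h1 : agr (k : ℕ) ((y ^ v) lam) β := agr_trans (pow_mem hyS v lam) hl
    rw [pow_succ', Equiv.Perm.mul_apply, hc _ h1, ih lam hl]
    push_cast
    ring

end Trans
end Weir
namespace Weir

section Main
variable {p n : ℕ}

/-- Update one coordinate of a point. -/
def upd (γ : Fin n → ZMod p) (k : Fin n) (c : ZMod p) : Fin n → ZMod p :=
  fun i => if i = k then c else γ i

lemma upd_same (γ : Fin n → ZMod p) (k : Fin n) (c : ZMod p) : upd γ k c k = c := if_pos rfl

lemma upd_ne (γ : Fin n → ZMod p) {k i : Fin n} (c : ZMod p) (h : i ≠ k) :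
    upd γ k c i = γ i := if_neg h

lemma ne_mk_of_val_lt {i : Fin n} {m : ℕ} (hm : m < n) (him : (i : ℕ) < m) :
    i ≠ ⟨m, hm⟩ := by
  intro e
  rw [e] at him
  exact absurd him (lt_irrefl m)

lemma commZ [NeZero p] [Fact p.Prime] {N : Subgroup (Equiv.Perm (Fin n → ZMod p))}
    (hNnormal : ∀ g ∈ PSyl p n, ∀ x ∈ N, g * x * g⁻¹ ∈ N)
    {j : ℕ} (hjn : j < n) {z : Equiv.Perm (Fin n → ZMod p)} (hzN : z ∈ N)
    (hzT : z ∈ TFilt p n j) {β : Fin n → ZMod p}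
    (hzd : ∀ lam, agr j lam β → z lam ⟨j, hjn⟩ = lam ⟨j, hjn⟩ + 1)
    {γ s t : _} (hγ : agr j γ β) (hs : s ∈ PSyl p n) (ht : t ∈ PSyl p n)
    (hss : supIn s (BlkS (j + 1) γ)) (hts : supIn t (BlkS (j + 1) γ)) :
    s * t * s⁻¹ * t⁻¹ ∈ N := by
  have hzP : z ∈ PSyl p n := TFilt_le_PSyl j hzT
  have hzR : z ∈ (Reg : Subgroup _) := PSyl_le_Reg hzP
  have hzS : z ∈ (Stb j : Subgroup _) := TFilt_le_Stb j hzT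
  have himg : (z : Equiv.Perm (Fin n → ZMod p)) '' (BlkS (j + 1) γ)
      ⊆ BlkS (j + 1) (upd γ ⟨j, hjn⟩ (γ ⟨j, hjn⟩ + 1)) := by
    rintro _ ⟨lam, hlam, rfl⟩
    intro i hi
    rcases Nat.lt_succ_iff_lt_or_eq.mp hi with him | him
    · rw [upd_ne γ _ (ne_mk_of_val_lt hjn him), hzS lam i him]
      exact hlam i (by omega)
    · have hik : i = ⟨j, hjn⟩ := Fin.ext him
      rw [hik, upd_same]
      have h1 : agr j lam β := agr_trans (agr_mono (Nat.le_succ j) hlam) hγ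
      rw [hzd lam h1, hlam ⟨j, hjn⟩ (Nat.lt_succ_self j)]
  have hdisj : ∀ xx, xx ∈ BlkS (j + 1) (upd γ ⟨j, hjn⟩ (γ ⟨j, hjn⟩ + 1)) →
      xx ∉ BlkS (j + 1) γ := by
    intro xx h2 h1
    have e1 : xx ⟨j, hjn⟩ = γ ⟨j, hjn⟩ := h1 ⟨j, hjn⟩ (Nat.lt_succ_self j)
    have e2 := h2 ⟨j, hjn⟩ (Nat.lt_succ_self j)
    rw [upd_same] at e2
    have : (1 : ZMod p) = 0 := by linear_combination e1 - e2
    exact one_ne_zero this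
  set w := z * s * z⁻¹ with hw
  have hwsup : supIn w (BlkS (j + 1) (upd γ ⟨j, hjn⟩ (γ ⟨j, hjn⟩ + 1))) :=
    supIn_mono himg (supIn_conj hss)
  have hwt : w * t = t * w := supIn_comm hwsup hts hdisj
  have hs'N : s * z * s⁻¹ * z⁻¹ ∈ N := mul_mem (hNnormal s hs z hzN) (inv_mem hzN)
  set s' := s * z * s⁻¹ * z⁻¹ with hs'
  have hse : s = s' * w := by rw [hs', hw]; group
  rw [hse]
  have h3 : s' * w * t * (s' * w)⁻¹ * t⁻¹ = s' * ((w * t) * w⁻¹ * s'⁻¹ * t⁻¹) := by group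
  rw [h3, hwt]
  have h4 : t * w * w⁻¹ * s'⁻¹ * t⁻¹ = t * s'⁻¹ * t⁻¹ := by group
  rw [h4]
  exact mul_mem hs'N (hNnormal t ht _ (inv_mem hs'N))

lemma shuffle [NeZero p] [Fact p.Prime] {N : Subgroup (Equiv.Perm (Fin n → ZMod p))}
    (hNnormal : ∀ g ∈ PSyl p n, ∀ x ∈ N, g * x * g⁻¹ ∈ N)
    {m : ℕ} (hm : m < n) (γ : Fin n → ZMod p)
    {z : Equiv.Perm (Fin n → ZMod p)} (hzP : z ∈ PSyl p n)
    (hzS : z ∈ (Stb m : Subgroup _))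
    (hzd : ∀ lam, agr m lam γ → z lam ⟨m, hm⟩ = lam ⟨m, hm⟩ + 1)
    (hcomm : ∀ s, s ∈ PSyl p n → supIn s (BlkS m γ) → s * z * s⁻¹ * z⁻¹ ∈ N)
    (hnext : ∀ u, u ∈ PSyl p n → supIn u (BlkS (m + 1) (upd γ ⟨m, hm⟩ 0)) →
      (∀ k : Fin n, m + 1 ≤ (k : ℕ) → psi u (m + 1) k (upd γ ⟨m, hm⟩ 0) = 0) →
      u ∈ N) :
    ∀ c : ℕ, c ≤ p → ∀ g, g ∈ PSyl p n →
      supIn g {lam | agr m lam γ ∧ (lam ⟨m, hm⟩).val < c} →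
      g ∈ (Stb (m + 1) : Subgroup _) →
      (∀ k : Fin n, m + 1 ≤ (k : ℕ) → psi g m k γ = 0) → g ∈ N := by
  have hzR : z ∈ (Reg : Subgroup _) := PSyl_le_Reg hzP
  intro c
  induction c with
  | zero =>
    intro _ g _ hgsup _ _
    have : g = 1 := Equiv.ext fun lam => hgsup lam (fun hmem => Nat.not_lt_zero _ hmem.2)
    rw [this]; exact one_mem N
  | succ c ih =>
    intro hc g hgP hgsup hgS hgpsi
    rcases Nat.eq_zero_or_pos c with hc0 | hcpos
    · subst hc0
      have hsup0 : supIn g (BlkS (m + 1) (upd γ ⟨m, hm⟩ 0)) := by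
        intro lam hl
        refine hgsup lam ?_
        rintro ⟨h1, h2⟩
        apply hl
        intro i hi
        rcases Nat.lt_succ_iff_lt_or_eq.mp hi with him | him
        · rw [upd_ne γ _ (ne_mk_of_val_lt hm him)]
          exact h1 i him
        · have hik : i = ⟨m, hm⟩ := Fin.ext him
          rw [hik, upd_same]
          exact (ZMod.val_eq_zero _).mp (by omega)
      have hγ0γ : agr m (upd γ ⟨m, hm⟩ 0) γ := fun i hi =>
        upd_ne γ _ (ne_mk_of_val_lt hm hi)
      refine hnext g hgP hsup0 (fun k hk => ?_)
      rw [← psi_level (Nat.le_succ m) hsup0, psi_congr_prefix hγ0γ g]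
      exact hgpsi k hk
    · -- peel child c
      have hcp : c < p := by omega
      have hgT : g ∈ TFilt p n (m + 1) := mem_TFilt_of_stb hgP hgS
      have hgcT : resB (m + 1) (upd γ ⟨m, hm⟩ ((c : ℕ) : ZMod p)) g hgS ∈ TFilt p n (m + 1) :=
        resB_mem_TFilt hgT hgS
      set gc := resB (m + 1) (upd γ ⟨m, hm⟩ ((c : ℕ) : ZMod p)) g hgS with hgcdef
      have hgcP : gc ∈ PSyl p n := TFilt_le_PSyl _ hgcT
      have hgcS : gc ∈ (Stb (m + 1) : Subgroup _) := TFilt_le_Stb _ hgcT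
      have hgcR : gc ∈ (Reg : Subgroup _) := PSyl_le_Reg hgcP
      have hgcsup : supIn gc (BlkS (m + 1) (upd γ ⟨m, hm⟩ ((c : ℕ) : ZMod p))) := resB_supIn
      have hsubM : BlkS (m + 1) (upd γ ⟨m, hm⟩ ((c : ℕ) : ZMod p)) ⊆ BlkS m γ := by
        intro lam hl i hi
        have := hl i (by omega)
        rwa [upd_ne γ _ (ne_mk_of_val_lt hm hi)] at this
      have hA : gc * z * gc⁻¹ * z⁻¹ ∈ N := hcomm gc hgcP (supIn_mono hsubM hgcsup)
      have hB : z⁻¹ * (gc * z * gc⁻¹ * z⁻¹)⁻¹ * z ∈ N := by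
        have := hNnormal z⁻¹ (inv_mem hzP) _ (inv_mem hA)
        rwa [inv_inv] at this
      set gc' := z⁻¹ * gc * z with hgc'def
      have hBgc : gc * gc'⁻¹ = z⁻¹ * (gc * z * gc⁻¹ * z⁻¹)⁻¹ * z := by
        rw [hgc'def]; group
      set hrem := g * gc⁻¹ with hremdef
      have hremP : hrem ∈ PSyl p n := mul_mem hgP (inv_mem hgcP)
      have hremsup : supIn hrem {lam | agr m lam γ ∧ (lam ⟨m, hm⟩).val < c} := by
        intro lam hl
        simp only [Set.mem_setOf_eq, not_and, not_lt] at hl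
        by_cases ha : agr m lam γ
        · have hval_ge : c ≤ (lam ⟨m, hm⟩).val := hl ha
          by_cases heq : (lam ⟨m, hm⟩).val = c
          · have hlc : agr (m + 1) lam (upd γ ⟨m, hm⟩ ((c : ℕ) : ZMod p)) := by
              intro i hi
              rcases Nat.lt_succ_iff_lt_or_eq.mp hi with him | him
              · rw [upd_ne γ _ (ne_mk_of_val_lt hm him)]
                exact ha i him
              · have hik : i = ⟨m, hm⟩ := Fin.ext him
                rw [hik, upd_same, ← heq, ZMod.natCast_val, ZMod.cast_id]
            have hinv : gc⁻¹ lam = g⁻¹ lam := by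
              rw [hgcdef, ← resB_inv hgS (inv_mem hgS), resB_apply_of hlc]
            rw [hremdef, Equiv.Perm.mul_apply, hinv, Equiv.Perm.apply_inv_self]
          · have h1 : gc⁻¹ lam = lam := by
              refine supIn_inv hgcsup lam ?_
              intro hmem
              apply heq
              have := hmem ⟨m, hm⟩ (Nat.lt_succ_self m)
              rw [upd_same] at this
              rw [this, ZMod.val_cast_of_lt hcp]
            have h2 : g lam = lam := by
              refine hgsup lam ?_
              rintro ⟨_, hv⟩
              omega
            rw [hremdef, Equiv.Perm.mul_apply, h1, h2]
        · have h1 : gc⁻¹ lam = lam :=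
            supIn_inv hgcsup lam (fun hmem => ha (hsubM hmem))
          have h2 : g lam = lam := hgsup lam (fun hmem => ha hmem.1)
          rw [hremdef, Equiv.Perm.mul_apply, h1, h2]
      have hgc'sup : supIn gc' (BlkS (m + 1) (upd γ ⟨m, hm⟩ ((c - 1 : ℕ) : ZMod p))) := by
        have himg : (z⁻¹ : Equiv.Perm (Fin n → ZMod p)) ''
            (BlkS (m + 1) (upd γ ⟨m, hm⟩ ((c : ℕ) : ZMod p)))
            ⊆ BlkS (m + 1) (upd γ ⟨m, hm⟩ ((c - 1 : ℕ) : ZMod p)) := by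
          rintro _ ⟨lam, hlam, rfl⟩
          have hlamM : agr m lam γ := hsubM hlam
          have hzlamM : agr m (z⁻¹ lam) γ := agr_trans (inv_mem hzS lam) hlamM
          intro i hi
          rcases Nat.lt_succ_iff_lt_or_eq.mp hi with him | him
          · rw [upd_ne γ _ (ne_mk_of_val_lt hm him)]
            exact hzlamM i him
          · have hik : i = ⟨m, hm⟩ := Fin.ext him
            rw [hik, upd_same]
            have hstep := hzd (z⁻¹ lam) hzlamM
            rw [Equiv.Perm.apply_inv_self] at hstep
            have hlamc : lam ⟨m, hm⟩ = ((c : ℕ) : ZMod p) := by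
              have := hlam ⟨m, hm⟩ (Nat.lt_succ_self m)
              rwa [upd_same] at this
            have hsub1 : ((c - 1 : ℕ) : ZMod p) = ((c : ℕ) : ZMod p) - 1 := by
              push_cast [Nat.cast_sub hcpos]
              ring
            rw [hsub1]
            linear_combination -hstep + hlamc
        have := supIn_conj (h := z⁻¹) hgcsup
        rw [inv_inv] at this
        exact supIn_mono himg this
      have hsubc1 : BlkS (m + 1) (upd γ ⟨m, hm⟩ ((c - 1 : ℕ) : ZMod p))
          ⊆ {lam | agr m lam γ ∧ (lam ⟨m, hm⟩).val < c} := by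
        intro lam hl
        constructor
        · intro i hi
          have := hl i (by omega)
          rwa [upd_ne γ _ (ne_mk_of_val_lt hm hi)] at this
        · have := hl ⟨m, hm⟩ (Nat.lt_succ_self m)
          rw [upd_same] at this
          rw [this, ZMod.val_cast_of_lt (by omega : c - 1 < p)]
          omega
      set gt := hrem * gc' with hgtdef
      have hgtP : gt ∈ PSyl p n :=
        mul_mem hremP (mul_mem (mul_mem (inv_mem hzP) hgcP) hzP)
      have hgtsup : supIn gt {lam | agr m lam γ ∧ (lam ⟨m, hm⟩).val < c} :=
        supIn_mul hremsup (supIn_mono hsubc1 hgc'sup)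
      have hgc'S : gc' ∈ (Stb (m + 1) : Subgroup _) := conj_stb_succ hgcS hzR hzS
      have hremS : hrem ∈ (Stb (m + 1) : Subgroup _) := mul_mem hgS (inv_mem hgcS)
      have hgtS : gt ∈ (Stb (m + 1) : Subgroup _) := mul_mem hremS hgc'S
      have hgtpsi : ∀ k : Fin n, m + 1 ≤ (k : ℕ) → psi gt m k γ = 0 := by
        intro k hk
        have hmk : m ≤ (k : ℕ) := by omega
        have hgR : g ∈ (Reg : Subgroup _) := PSyl_le_Reg hgP
        have hgcSm : gc ∈ (Stb m : Subgroup _) := Stb_mono (Nat.le_succ m) hgcS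
        have hremR : hrem ∈ (Reg : Subgroup _) := PSyl_le_Reg hremP
        have hgc'R : gc' ∈ (Reg : Subgroup _) :=
          PSyl_le_Reg (mul_mem (mul_mem (inv_mem hzP) hgcP) hzP)
        have hgc'Sm : gc' ∈ (Stb m : Subgroup _) := Stb_mono (Nat.le_succ m) hgc'S
        have e1 : psi gt m k γ = psi hrem m k γ + psi gc' m k γ := by
          rw [hgtdef]; exact psi_mul hmk hremR hgc'R hgc'Sm γ
        have e2 : psi hrem m k γ = psi g m k γ + psi gc⁻¹ m k γ := by
          rw [hremdef]; exact psi_mul hmk hgR (inv_mem hgcR) (inv_mem hgcSm) γ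
        have e3 : psi gc' m k γ = psi gc m k γ := by
          have hrw : gc' = z⁻¹ * gc * (z⁻¹)⁻¹ := by rw [hgc'def, inv_inv]
          rw [hrw]
          exact psi_conj hmk hgcR hgcSm (inv_mem hzR) (inv_mem hzS) γ
        rw [e1, e2, e3, psi_inv hmk hgcR hgcSm γ]
        have := hgpsi k hk
        linear_combination this
      have hgtN : gt ∈ N := ih (by omega) gt hgtP hgtsup hgtS hgtpsi
      have hcorr : hrem * (gc * gc'⁻¹) * hrem⁻¹ ∈ N := by
        refine hNnormal hrem hremP _ ?_
        rw [hBgc]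
        exact hB
      have hfinal : g = (hrem * (gc * gc'⁻¹) * hrem⁻¹) * gt := by
        rw [hgtdef, hremdef, hgc'def]; group
      rw [hfinal]
      exact mul_mem hcorr hgtN

end Main
end Weir
namespace Weir

section Final
variable {p n : ℕ}

lemma core [NeZero p] [Fact p.Prime] {N : Subgroup (Equiv.Perm (Fin n → ZMod p))}
    (hNnormal : ∀ g ∈ PSyl p n, ∀ x ∈ N, g * x * g⁻¹ ∈ N)
    {j : ℕ} (hjn : j < n) {z : Equiv.Perm (Fin n → ZMod p)} {β : Fin n → ZMod p}
    (hzN : z ∈ N) (hzT : z ∈ TFilt p n j)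
    (hzd : ∀ lam, agr j lam β → z lam ⟨j, hjn⟩ = lam ⟨j, hjn⟩ + 1) :
    ∀ t m, n = m + t → j + 1 ≤ m → ∀ (γ : Fin n → ZMod p) g, agr j γ β → g ∈ PSyl p n →
      supIn g (BlkS m γ) → (∀ k : Fin n, m ≤ (k : ℕ) → psi g m k γ = 0) → g ∈ N := by
  intro t
  induction t with
  | zero =>
    intro m hmn _ γ g _ _ hgsup _
    have hmn' : m = n := by omega
    subst hmn'
    have hsub : BlkS m γ ⊆ {γ} := by
      intro lam hl
      have : lam = γ := funext fun i => hl i i.isLt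
      simp [this]
    rw [supIn_singleton_eq_one (supIn_mono hsub hgsup)]
    exact one_mem N
  | succ t ih =>
    intro m hmn hjm γ g hγ hgP hgsup hgpsi
    have hm : m < n := by omega
    have hgR : g ∈ (Reg : Subgroup _) := PSyl_le_Reg hgP
    have hdd : dsh g ⟨m, hm⟩ (rp m γ) = 0 := by
      rw [← psi_single hm g γ]
      exact hgpsi ⟨m, hm⟩ (le_refl m)
    have hgS : g ∈ (Stb (m + 1) : Subgroup _) := stb_succ hm hgR hgsup hdd
    obtain ⟨z', hz'T, hz'sup, hz'd⟩ := exists_mover hm γ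
    have hz'P : z' ∈ PSyl p n := TFilt_le_PSyl m hz'T
    have hz'S : z' ∈ (Stb m : Subgroup _) := TFilt_le_Stb m hz'T
    have hcomm : ∀ s, s ∈ PSyl p n → supIn s (BlkS m γ) → s * z' * s⁻¹ * z'⁻¹ ∈ N := by
      intro s hs hssup
      exact commZ hNnormal hjn hzN hzT hzd hγ hs hz'P
        (supIn_mono (BlkS_mono (by omega) γ) hssup)
        (supIn_mono (BlkS_mono (by omega) γ) hz'sup)
    have hγ0 : agr j (upd γ ⟨m, hm⟩ 0) β := by
      intro i hi
      rw [upd_ne γ _ (ne_mk_of_val_lt hm (by omega))]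
      exact hγ i hi
    have hnext : ∀ u, u ∈ PSyl p n → supIn u (BlkS (m + 1) (upd γ ⟨m, hm⟩ 0)) →
        (∀ k : Fin n, m + 1 ≤ (k : ℕ) → psi u (m + 1) k (upd γ ⟨m, hm⟩ 0) = 0) →
        u ∈ N := by
      intro u huP husup hupsi
      exact ih (m + 1) (by omega) (by omega) _ u hγ0 huP husup hupsi
    refine shuffle hNnormal hm γ hz'P hz'S hz'd hcomm hnext p (le_refl p) g hgP ?_ hgS
      (fun k hk => hgpsi k (by omega))
    intro lam hl
    exact hgsup lam (fun ha => hl ⟨ha, ZMod.val_lt _⟩)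

lemma blocks [NeZero p] [Fact p.Prime] {N : Subgroup (Equiv.Perm (Fin n → ZMod p))}
    (hNP : N ≤ PSyl p n)
    (hNnormal : ∀ g ∈ PSyl p n, ∀ x ∈ N, g * x * g⁻¹ ∈ N)
    {j : ℕ} (hjn : j < n) {x : Equiv.Perm (Fin n → ZMod p)} {lam0 : Fin n → ZMod p}
    (hxN : x ∈ N) (hxT : x ∈ TFilt p n j) (hc0 : dsh x ⟨j, hjn⟩ lam0 ≠ 0) :
    ∀ g, g ∈ TFilt p n j →
      (∀ (k : Fin n) (β : Fin n → ZMod p), j ≤ (k : ℕ) → psi g j k β = 0) → g ∈ N := by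
  classical
  have mkZ : ∀ β : Fin n → ZMod p, ∃ z, z ∈ N ∧ z ∈ TFilt p n j ∧
      ∀ lam, agr j lam β → z lam ⟨j, hjn⟩ = lam ⟨j, hjn⟩ + 1 := by
    intro β
    obtain ⟨h1, h1P, h10⟩ := exists_trans (p := p) (n := n) lam0
    obtain ⟨h2, h2P, h20⟩ := exists_trans (p := p) (n := n) β
    have hwP : h2 * h1⁻¹ ∈ PSyl p n := mul_mem h2P (inv_mem h1P)
    have hwR : h2 * h1⁻¹ ∈ (Reg : Subgroup _) := PSyl_le_Reg hwP
    have hyN : (h2 * h1⁻¹) * x * (h2 * h1⁻¹)⁻¹ ∈ N := hNnormal _ hwP x hxN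
    have hyT : (h2 * h1⁻¹) * x * (h2 * h1⁻¹)⁻¹ ∈ TFilt p n j := TFilt_conj hwP hxT
    set y := (h2 * h1⁻¹) * x * (h2 * h1⁻¹)⁻¹ with hydef
    have hyS : y ∈ (Stb j : Subgroup _) := TFilt_le_Stb j hyT
    have hxS : x ∈ (Stb j : Subgroup _) := TFilt_le_Stb j hxT
    have hxR : x ∈ (Reg : Subgroup _) := PSyl_le_Reg (TFilt_le_PSyl j hxT)
    have hdy : ∀ lam, agr j lam β → dsh y ⟨j, hjn⟩ lam = dsh x ⟨j, hjn⟩ lam0 := by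
      intro lam hl
      rw [hydef]
      apply dsh_conj hxR hxS hwR
      have e : (h2 * h1⁻¹)⁻¹ lam = h1 (h2⁻¹ lam) := by
        rw [mul_inv_rev, inv_inv, Equiv.Perm.mul_apply]
      rw [e]
      have hl2 : agr j lam (h2 (fun _ => 0)) := by rw [h20]; exact hl
      have hl3 : agr j (h2⁻¹ lam) (fun _ => 0) := by
        apply Reg_agr_bwd (PSyl_le_Reg h2P)
        rw [Equiv.Perm.apply_inv_self]
        exact hl2
      have hl4 := Reg_agr_fwd (PSyl_le_Reg h1P) hl3
      rw [h10] at hl4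
      exact hl4
    refine ⟨y ^ ((dsh x ⟨j, hjn⟩ lam0)⁻¹ : ZMod p).val, pow_mem hyN _, pow_mem hyT _, ?_⟩
    intro lam hl
    have hstep : ∀ mu, agr j mu β → y mu ⟨j, hjn⟩ = mu ⟨j, hjn⟩ + dsh x ⟨j, hjn⟩ lam0 := by
      intro mu hmu
      have h5 := hdy mu hmu
      unfold dsh at h5
      unfold dsh
      linear_combination h5
    have hpow := dsh_pow (k := ⟨j, hjn⟩) hyS hstep ((dsh x ⟨j, hjn⟩ lam0)⁻¹ : ZMod p).val lam hl
    rw [hpow, ZMod.natCast_val, ZMod.cast_id, inv_mul_cancel₀ hc0]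
  have H : ∀ cnt : ℕ, ∀ g, (Finset.univ.filter (fun lam => g lam ≠ lam)).card ≤ cnt →
      g ∈ TFilt p n j →
      (∀ (k : Fin n) (β : Fin n → ZMod p), j ≤ (k : ℕ) → psi g j k β = 0) → g ∈ N := by
    intro cnt
    induction cnt with
    | zero =>
      intro g hcard _ _
      have hg1 : g = 1 := by
        apply Equiv.ext
        intro lam
        rw [Equiv.Perm.one_apply]
        by_contra hne
        have hmem : lam ∈ Finset.univ.filter (fun lam => g lam ≠ lam) := by
          simp only [Finset.mem_filter, Finset.mem_univ, true_and]
          exact hne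
        have h1 := Finset.card_pos.mpr ⟨lam, hmem⟩
        omega
      rw [hg1]; exact one_mem N
    | succ cnt ih =>
      intro g hcard hgT hgpsi
      by_cases hone : g = 1
      · rw [hone]; exact one_mem N
      · have hex : ∃ lam, g lam ≠ lam := by
          by_contra hno
          push_neg at hno
          exact hone (Equiv.ext hno)
        obtain ⟨l0, hl0⟩ := hex
        have hgS : g ∈ (Stb j : Subgroup _) := TFilt_le_Stb j hgT
        have hgbT : resB j l0 g hgS ∈ TFilt p n j := resB_mem_TFilt hgT hgS
        set gb := resB j l0 g hgS with hgbdef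
        have hgbP : gb ∈ PSyl p n := TFilt_le_PSyl j hgbT
        have hgbR : gb ∈ (Reg : Subgroup _) := PSyl_le_Reg hgbP
        have hgbS : gb ∈ (Stb j : Subgroup _) := TFilt_le_Stb j hgbT
        have hgbsup : supIn gb (BlkS j l0) := resB_supIn
        have hpsib : ∀ k : Fin n, j ≤ (k : ℕ) → psi gb j k l0 = 0 := by
          intro k hk
          rw [hgbdef, psi_resB_same (agr_rfl j l0)]
          exact hgpsi k l0 hk
        have hgbN : gb ∈ N := by
          obtain ⟨z, hzN, hzT, hzd⟩ := mkZ l0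
          have hdd : dsh gb ⟨j, hjn⟩ (rp j l0) = 0 := by
            rw [← psi_single hjn gb l0]
            exact hpsib ⟨j, hjn⟩ (le_refl j)
          have hgbS1 : gb ∈ (Stb (j + 1) : Subgroup _) := stb_succ hjn hgbR hgbsup hdd
          have hzP : z ∈ PSyl p n := hNP hzN
          have hzS : z ∈ (Stb j : Subgroup _) := TFilt_le_Stb j hzT
          have hcomm : ∀ s, s ∈ PSyl p n → supIn s (BlkS j l0) →
              s * z * s⁻¹ * z⁻¹ ∈ N :=
            fun s hs _ => mul_mem (hNnormal s hs z hzN) (inv_mem hzN)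
          have hγ0 : agr j (upd l0 ⟨j, hjn⟩ 0) l0 := fun i hi =>
            upd_ne l0 _ (ne_mk_of_val_lt hjn hi)
          have hnext : ∀ u, u ∈ PSyl p n → supIn u (BlkS (j + 1) (upd l0 ⟨j, hjn⟩ 0)) →
              (∀ k : Fin n, j + 1 ≤ (k : ℕ) → psi u (j + 1) k (upd l0 ⟨j, hjn⟩ 0) = 0) →
              u ∈ N := by
            intro u huP husup hupsi
            exact core hNnormal hjn hzN hzT hzd (n - (j + 1)) (j + 1) (by omega)
              (le_refl _) _ u hγ0 huP husup hupsi
          refine shuffle hNnormal hjn l0 hzP hzS hzd hcomm hnext p (le_refl p) gb hgbP ?_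
            hgbS1 (fun k hk => hpsib k (by omega))
          intro lam hl
          exact hgbsup lam (fun ha => hl ⟨ha, ZMod.val_lt _⟩)
        have hremT : gb⁻¹ * g ∈ TFilt p n j := mul_mem (inv_mem hgbT) hgT
        have hgR : g ∈ (Reg : Subgroup _) := PSyl_le_Reg (TFilt_le_PSyl j hgT)
        have hpsirem : ∀ (k : Fin n) (β' : Fin n → ZMod p), j ≤ (k : ℕ) →
            psi (gb⁻¹ * g) j k β' = 0 := by
          intro k β' hk
          rw [psi_mul hk (inv_mem hgbR) hgR hgS β', psi_inv hk hgbR hgbS β']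
          by_cases hbb : agr j β' l0
          · rw [hgbdef, psi_resB_same hbb, hgpsi k β' hk]
            simp
          · rw [hgbdef, psi_resB_other hbb, hgpsi k β' hk]
            simp
        have hl0mem : l0 ∈ Finset.univ.filter (fun lam => g lam ≠ lam) := by
          simp only [Finset.mem_filter, Finset.mem_univ, true_and]
          exact hl0
        have hsub : (Finset.univ.filter (fun lam => (gb⁻¹ * g) lam ≠ lam))
            ⊆ (Finset.univ.filter (fun lam => g lam ≠ lam)).erase l0 := by
          intro mu hmu
          simp only [Finset.mem_filter, Finset.mem_univ, true_and] at hmu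
          rw [Finset.mem_erase]
          constructor
          · intro e
            subst e
            apply hmu
            have hagr : agr j (g mu) mu := hgS mu
            have hres : gb⁻¹ (g mu) = g⁻¹ (g mu) := by
              rw [hgbdef, ← resB_inv hgS (inv_mem hgS), resB_apply_of hagr]
            rw [Equiv.Perm.mul_apply, hres, Equiv.Perm.inv_apply_self]
          · simp only [Finset.mem_filter, Finset.mem_univ, true_and]
            intro hfix
            apply hmu
            have h1 : gb⁻¹ mu = mu := by
              by_cases hbb : agr j mu l0
              · rw [hgbdef, ← resB_inv hgS (inv_mem hgS), resB_apply_of hbb]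
                conv_lhs => rw [← hfix]
                rw [Equiv.Perm.inv_apply_self]
              · rw [hgbdef, ← resB_inv hgS (inv_mem hgS), resB_apply_of_not hbb]
            rw [Equiv.Perm.mul_apply, hfix, h1]
        have hcard2 : (Finset.univ.filter (fun lam => (gb⁻¹ * g) lam ≠ lam)).card ≤ cnt := by
          have h1 := Finset.card_le_card hsub
          have h2 := Finset.card_erase_of_mem hl0mem
          omega
        have hremN := ih (gb⁻¹ * g) hcard2 hremT hpsirem
        have hgeq : g = gb * (gb⁻¹ * g) := by group
        rw [hgeq]
        exact mul_mem hgbN hremN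
  intro g hgT hgpsi
  exact H _ g (le_refl _) hgT hgpsi

end Final
end Weir

open Weir
/-- If the normal subgroup `N` of `P_n` has depth `j` (i.e. `j` is the largest index
`≤ n` with `N ≤ T_j`), then `[T_j, T_j] ≤ N`. -/
theorem commutator_TFilt_le_of_depth (hp : p.Prime) (hn : 1 ≤ n)
    (N : Subgroup (Equiv.Perm (Fin n → ZMod p)))
    (hNP : N ≤ PSyl p n)
    (hNnormal : ∀ g ∈ PSyl p n, ∀ x ∈ N, g * x * g⁻¹ ∈ N)
    (j : ℕ) (hj : j ≤ n) (hdepth : N ≤ TFilt p n j)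
    (hdepth' : ∀ k ≤ n, N ≤ TFilt p n k → k ≤ j) :
    ⁅TFilt p n j, TFilt p n j⁆ ≤ N := by
  classical
  haveI : Fact p.Prime := ⟨hp⟩
  haveI : NeZero p := ⟨hp.ne_zero⟩
  by_cases hjn : j < n
  · have hnle : ¬ N ≤ TFilt p n (j + 1) := by
      intro hle
      have := hdepth' (j + 1) (by omega) hle
      omega
    rw [SetLike.le_def] at hnle
    push_neg at hnle
    obtain ⟨x, hxN, hxT1⟩ := hnle
    have hxT : x ∈ TFilt p n j := hdepth hxN
    have hxP : x ∈ PSyl p n := hNP hxN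
    have hxS : x ∈ (Stb j : Subgroup _) := TFilt_le_Stb j hxT
    have hxnot : x ∉ (Stb (j + 1) : Subgroup _) := fun hs => hxT1 (mem_TFilt_of_stb hxP hs)
    have hex : ∃ lam0, dsh x ⟨j, hjn⟩ lam0 ≠ 0 := by
      by_contra hno
      push_neg at hno
      apply hxnot
      intro lam i hi
      rcases Nat.lt_succ_iff_lt_or_eq.mp hi with him | him
      · exact hxS lam i him
      · have hik : i = ⟨j, hjn⟩ := Fin.ext him
        subst hik
        have hzero := hno lam
        unfold dsh at hzero
        linear_combination hzero
    obtain ⟨lam0, hc0⟩ := hex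
    rw [Subgroup.commutator_le]
    intro g1 hg1 g2 hg2
    open scoped commutatorElement in
    refine blocks hNP hNnormal hjn hxN hxT hc0 ⁅g1, g2⁆ ?_ ?_
    · rw [commutatorElement_def]
      exact mul_mem (mul_mem (mul_mem hg1 hg2) (inv_mem hg1)) (inv_mem hg2)
    · intro k β hk
      have hR1 : g1 ∈ (Reg : Subgroup _) := PSyl_le_Reg (TFilt_le_PSyl j hg1)
      have hR2 : g2 ∈ (Reg : Subgroup _) := PSyl_le_Reg (TFilt_le_PSyl j hg2)
      have hS1 : g1 ∈ (Stb j : Subgroup _) := TFilt_le_Stb j hg1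
      have hS2 : g2 ∈ (Stb j : Subgroup _) := TFilt_le_Stb j hg2
      rw [commutatorElement_def,
        psi_mul hk (mul_mem (mul_mem hR1 hR2) (inv_mem hR1)) (inv_mem hR2) (inv_mem hS2) β,
        psi_mul hk (mul_mem hR1 hR2) (inv_mem hR1) (inv_mem hS1) β,
        psi_mul hk hR1 hR2 hS2 β,
        psi_inv hk hR1 hS1 β, psi_inv hk hR2 hS2 β]
      ring
  · have hTbot : ∀ y ∈ TFilt p n j, y = 1 := by
      intro y hy
      have hle : TFilt p n j ≤ ⊥ := by
        rw [TFilt]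
        refine (Subgroup.closure_le _).mpr ?_
        rintro xx ⟨g, hg, i, hin, rfl⟩
        exact absurd i.isLt (by omega)
      simpa [Subgroup.mem_bot] using hle hy
    rw [Subgroup.commutator_le]
    intro g1 hg1 g2 hg2
    rw [hTbot g1 hg1, hTbot g2 hg2]
    simpa using one_mem N
end

section
/- Let p be a prime and n ≥ 1. The subgroup ⟨σ_0,…,σ_{n−1}⟩ of Sym(F_p^n) has order p^{1+p+p^2+⋯+p^{n−1}}, hence is a Sylow p-subgroup of Sym(F_p^n), and it acts transitively on F_p^n. -/
variable (p n : ℕ)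

section Aux

/-- Triangular permutations: `(g lam) k - lam k` depends only on coordinates `< k`. -/
def IsTri (g : Equiv.Perm (Fin n → ZMod p)) : Prop :=
  ∀ (k : Fin n) (lam mu : Fin n → ZMod p), (∀ j, j < k → lam j = mu j) →
    g lam k - lam k = g mu k - mu k

variable {p n}

lemma IsTri.apply_eq {g : Equiv.Perm (Fin n → ZMod p)} (hg : IsTri p n g)
    {lam mu : Fin n → ZMod p} {k : Fin n} (h : ∀ j, j < k → lam j = mu j)
    (hk : lam k = mu k) : g lam k = g mu k := by
  have := hg k lam mu h
  have h2 : g lam k = g mu k - mu k + lam k := by linear_combination this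
  rw [h2, hk]; ring

lemma IsTri.one : IsTri p n (1 : Equiv.Perm (Fin n → ZMod p)) := by
  intro k lam mu h; simp

lemma IsTri.mul {g h : Equiv.Perm (Fin n → ZMod p)} (hg : IsTri p n g) (hh : IsTri p n h) :
    IsTri p n (g * h) := by
  intro k lam mu hagree
  have hagree' : ∀ j, j < k → h lam j = h mu j := fun j hj =>
    hh.apply_eq (fun j' hj' => hagree j' (hj'.trans hj)) (hagree j hj)
  have e1 := hg k (h lam) (h mu) hagree'
  have e2 := hh k lam mu hagree
  simp only [Equiv.Perm.mul_apply]
  linear_combination e1 + e2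

lemma IsTri.inv {g : Equiv.Perm (Fin n → ZMod p)} (hg : IsTri p n g) :
    IsTri p n g⁻¹ := by
  intro k lam mu hagree
  have key : ∀ m : ℕ, ∀ j : Fin n, (j : ℕ) < m → j < k → g⁻¹ lam j = g⁻¹ mu j := by
    intro m
    induction m with
    | zero => intro j hj; omega
    | succ m ih =>
      intro j hj hjk
      have hsub : ∀ j', j' < j → g⁻¹ lam j' = g⁻¹ mu j' := fun j' hj' =>
        ih j' (by omega) (hj'.trans hjk)
      have := hg j (g⁻¹ lam) (g⁻¹ mu) hsub
      simp only [Equiv.Perm.apply_inv_self] at this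
      have hl : lam j = mu j := hagree j hjk
      linear_combination hl - this
  have hsub : ∀ j, j < k → g⁻¹ lam j = g⁻¹ mu j := fun j hj => key n j j.isLt hj
  have := hg k (g⁻¹ lam) (g⁻¹ mu) hsub
  simp only [Equiv.Perm.apply_inv_self] at this
  linear_combination -this

variable (p n)

/-- The subgroup of triangular permutations fixing all coordinates `< k`. -/
def Tk (k : ℕ) : Subgroup (Equiv.Perm (Fin n → ZMod p)) where
  carrier := {g | IsTri p n g ∧ ∀ j : Fin n, (j : ℕ) < k → ∀ lam, g lam j = lam j}
  one_mem' := ⟨IsTri.one, fun _ _ _ => rfl⟩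
  mul_mem' := by
    rintro g h ⟨hg1, hg2⟩ ⟨hh1, hh2⟩
    refine ⟨hg1.mul hh1, fun j hj lam => ?_⟩
    simp only [Equiv.Perm.mul_apply]
    rw [hg2 j hj, hh2 j hj]
  inv_mem' := by
    rintro g ⟨hg1, hg2⟩
    refine ⟨hg1.inv, fun j hj lam => ?_⟩
    have := hg2 j hj (g⁻¹ lam)
    rw [Equiv.Perm.apply_inv_self] at this
    exact this.symm

variable {p n}

lemma Tk_antitone {k l : ℕ} (h : k ≤ l) : Tk p n l ≤ Tk p n k := by
  rintro g ⟨h1, h2⟩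
  exact ⟨h1, fun j hj lam => h2 j (lt_of_lt_of_le hj h) lam⟩

lemma sigmaPerm_apply (i : Fin n) (lam : Fin n → ZMod p) (k : Fin n) :
    sigmaPerm p n i lam k =
      if k = i ∧ ∀ j : Fin n, j < i → lam j = 0 then lam k + 1 else lam k := rfl

lemma sigmaPerm_apply_of_ne (i : Fin n) (lam : Fin n → ZMod p) {j : Fin n} (hj : j ≠ i) :
    sigmaPerm p n i lam j = lam j := by
  rw [sigmaPerm_apply, if_neg (fun hc => hj hc.1)]

lemma sigmaPerm_mem_Tk (i : Fin n) : sigmaPerm p n i ∈ Tk p n i := by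
  constructor
  · intro k lam mu hagree
    by_cases hk : k = i
    · subst hk
      by_cases hc : ∀ j : Fin n, j < k → lam j = 0
      · have hc' : ∀ j : Fin n, j < k → mu j = 0 := fun j hj => (hagree j hj) ▸ hc j hj
        rw [sigmaPerm_apply, sigmaPerm_apply, if_pos ⟨rfl, hc⟩, if_pos ⟨rfl, hc'⟩]
        ring
      · have hc' : ¬ ∀ j : Fin n, j < k → mu j = 0 := fun h =>
          hc fun j hj => (hagree j hj).symm ▸ h j hj
        rw [sigmaPerm_apply, sigmaPerm_apply, if_neg (by tauto), if_neg (by tauto)]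
        ring
    · rw [sigmaPerm_apply, sigmaPerm_apply, if_neg (by tauto), if_neg (by tauto)]
      ring
  · intro j hj lam
    rw [sigmaPerm_apply, if_neg]
    rintro ⟨h1, -⟩
    exact absurd (h1 ▸ hj) (lt_irrefl _)

lemma sigmaPerm_mem_Tk_zero (i : Fin n) : sigmaPerm p n i ∈ Tk p n 0 :=
  Tk_antitone (Nat.zero_le _) (sigmaPerm_mem_Tk i)

lemma PSyl_le_Tk_zero : PSyl p n ≤ Tk p n 0 := by
  rw [PSyl, Subgroup.closure_le]
  rintro g ⟨i, rfl⟩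
  exact sigmaPerm_mem_Tk_zero i

lemma sigmaPerm_pow_apply (i : Fin n) (m : ℕ) (u : Fin n → ZMod p)
    (hu : ∀ j, j < i → u j = 0) (k : Fin n) :
    ((sigmaPerm p n i) ^ m) u k = if k = i then u k + m else u k := by
  induction m generalizing k with
  | zero => simp
  | succ m ih =>
    rw [pow_succ', Equiv.Perm.mul_apply]
    have hw : ∀ j : Fin n, j < i → ((sigmaPerm p n i) ^ m) u j = 0 := by
      intro j hj
      rw [ih j, if_neg (ne_of_lt hj)]
      exact hu j hj
    by_cases hk : k = i
    · subst hk
      rw [sigmaPerm_apply, if_pos ⟨rfl, hw⟩, ih k, if_pos rfl, if_pos rfl]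
      push_cast
      ring
    · rw [sigmaPerm_apply, if_neg (by tauto), ih k, if_neg hk, if_neg hk]

lemma exists_PSyl_maps_to_zero (hp : p.Prime) (v : Fin n → ZMod p) :
    ∃ g ∈ PSyl p n, g v = 0 := by
  haveI : NeZero p := ⟨hp.ne_zero⟩
  suffices h : ∀ m : ℕ, ∃ g ∈ PSyl p n,
      (∀ k : Fin n, (k : ℕ) < m → g v k = 0) ∧ (∀ k : Fin n, m ≤ (k : ℕ) → g v k = v k) by
    obtain ⟨g, hg, h1, -⟩ := h n
    exact ⟨g, hg, funext fun k => h1 k k.isLt⟩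
  intro m
  induction m with
  | zero => exact ⟨1, one_mem _, fun k hk => absurd hk (by omega), fun k _ => rfl⟩
  | succ m ih =>
    obtain ⟨g, hg, h1, h2⟩ := ih
    by_cases hmn : m < n
    · set i : Fin n := ⟨m, hmn⟩ with hi
      set u : Fin n → ZMod p := g v with hu
      have hu0 : ∀ j, j < i → u j = 0 := fun j hj => h1 j hj
      set e : ℕ := (-(u i)).val with he
      refine ⟨(sigmaPerm p n i) ^ e * g, mul_mem (pow_mem (Subgroup.subset_closure (Set.mem_range_self i)) e) hg,
        ?_, ?_⟩
      · intro k hk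
        rw [Equiv.Perm.mul_apply, ← hu, sigmaPerm_pow_apply i e u hu0 k]
        by_cases hki : k = i
        · rw [if_pos hki, hki, he]
          simp [ZMod.natCast_val, ZMod.cast_id]
        · rw [if_neg hki]
          have : (k : ℕ) < m := by
            rcases Nat.lt_succ_iff_lt_or_eq.mp hk with h | h
            · exact h
            · exact absurd (Fin.ext h : k = i) hki
          exact h1 k this
      · intro k hk
        rw [Equiv.Perm.mul_apply, ← hu, sigmaPerm_pow_apply i e u hu0 k,
          if_neg (fun hki => by
            have hkm : (k : ℕ) = m := by rw [hki]
            omega)]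
        exact h2 k (by omega)
    · refine ⟨g, hg, fun k _ => h1 k (by have := k.isLt; omega), fun k hk => h2 k (by omega)⟩

lemma PSyl_transitive (hp : p.Prime) (v w : Fin n → ZMod p) : ∃ g ∈ PSyl p n, g v = w := by
  obtain ⟨gv, hgv, hv⟩ := exists_PSyl_maps_to_zero hp v
  obtain ⟨gw, hgw, hw⟩ := exists_PSyl_maps_to_zero hp w
  refine ⟨gw⁻¹ * gv, mul_mem (inv_mem hgw) hgv, ?_⟩
  rw [Equiv.Perm.mul_apply, hv, ← hw, Equiv.Perm.inv_apply_self]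

variable (p n) in
/-- Extend a `k`-tuple by zeros to an `n`-tuple. -/
def extMap (k : ℕ) (x : Fin k → ZMod p) : Fin n → ZMod p :=
  fun j => if h : (j : ℕ) < k then x ⟨j, h⟩ else 0

lemma extMap_apply_lt {k : ℕ} (x : Fin k → ZMod p) {j : Fin n} (h : (j : ℕ) < k) :
    extMap p n k x j = x ⟨j, h⟩ := dif_pos h

lemma extMap_apply_of_le {k : ℕ} (x : Fin k → ZMod p) {j : Fin n} (h : k ≤ (j : ℕ)) :
    extMap p n k x j = 0 := dif_neg (by omega)

lemma extMap_trunc {k : ℕ} (hk : k ≤ n) (lam : Fin n → ZMod p) {j : Fin n}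
    (hj : (j : ℕ) < k) :
    extMap p n k (fun j' : Fin k => lam ⟨j', lt_of_lt_of_le j'.isLt hk⟩) j = lam j := by
  rw [extMap_apply_lt _ hj]

lemma phi_add {k : ℕ} (hk : k < n) {g g' : Equiv.Perm (Fin n → ZMod p)}
    (hg : IsTri p n g) (hg' : g' ∈ Tk p n k) (x : Fin k → ZMod p) :
    (g * g') (extMap p n k x) ⟨k, hk⟩ =
      g (extMap p n k x) ⟨k, hk⟩ + g' (extMap p n k x) ⟨k, hk⟩ := by
  set i : Fin n := ⟨k, hk⟩
  set u := extMap p n k x with hu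
  have hagree : ∀ j, j < i → g' u j = u j := fun j hj => hg'.2 j hj u
  have h1 := hg i (g' u) u hagree
  have h2 : u i = 0 := extMap_apply_of_le x (le_refl k)
  rw [Equiv.Perm.mul_apply]
  linear_combination h1 - h2

lemma ker_char {k : ℕ} (hk : k < n) {g : Equiv.Perm (Fin n → ZMod p)}
    (hg : g ∈ Tk p n k) (h0 : ∀ x : Fin k → ZMod p, g (extMap p n k x) ⟨k, hk⟩ = 0) :
    g ∈ Tk p n (k + 1) := by
  refine ⟨hg.1, fun j hj lam => ?_⟩
  rcases Nat.lt_succ_iff_lt_or_eq.mp hj with h | h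
  · exact hg.2 j h lam
  · have hji : j = (⟨k, hk⟩ : Fin n) := Fin.ext h
    set x : Fin k → ZMod p := fun j' : Fin k => lam ⟨j', lt_of_lt_of_le j'.isLt hk.le⟩ with hx
    have hagree : ∀ j', j' < j → lam j' = extMap p n k x j' := by
      intro j' hj'
      have hj'k : (j' : ℕ) < k := by rw [hji] at hj'; exact hj'
      exact (extMap_trunc hk.le lam hj'k).symm
    have key := hg.1 j lam (extMap p n k x) hagree
    rw [hji] at key
    rw [h0 x, extMap_apply_of_le x (le_refl k)] at key
    rw [hji]
    linear_combination key

lemma exists_delta (hp : p.Prime) {k : ℕ} (hk : k < n) (a : Fin k → ZMod p) :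
    ∃ g, (g ∈ PSyl p n ∧ g ∈ Tk p n k) ∧ ∀ x : Fin k → ZMod p,
      g (extMap p n k x) ⟨k, hk⟩ = if x = a then 1 else 0 := by
  set i : Fin n := ⟨k, hk⟩
  obtain ⟨h, hhP, hh0⟩ := PSyl_transitive hp 0 (extMap p n k a)
  have hhtri : IsTri p n h := (PSyl_le_Tk_zero hhP).1
  have hhinv : IsTri p n h⁻¹ := hhtri.inv
  have hinv0 : h⁻¹ (extMap p n k a) = 0 := by rw [← hh0, Equiv.Perm.inv_apply_self]
  have hσtri : IsTri p n (sigmaPerm p n i) := (sigmaPerm_mem_Tk i).1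
  refine ⟨h * sigmaPerm p n i * h⁻¹, ⟨?_, ?_, ?_⟩, ?_⟩
  · exact mul_mem (mul_mem hhP (Subgroup.subset_closure (Set.mem_range_self i))) (inv_mem hhP)
  · exact (hhtri.mul hσtri).mul hhinv
  · -- fixes coordinates < k
    intro j hj lam
    simp only [Equiv.Perm.mul_apply]
    have hji : j < i := hj
    have hagree : ∀ j', j' < j → sigmaPerm p n i (h⁻¹ lam) j' = h⁻¹ lam j' :=
      fun j' hj' => sigmaPerm_apply_of_ne i _ (ne_of_lt (hj'.trans hji))
    have hatj : sigmaPerm p n i (h⁻¹ lam) j = h⁻¹ lam j :=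
      sigmaPerm_apply_of_ne i _ (ne_of_lt hji)
    rw [hhtri.apply_eq hagree hatj, Equiv.Perm.apply_inv_self]
  · intro x
    simp only [Equiv.Perm.mul_apply]
    set u := extMap p n k x with hu
    set μ := h⁻¹ u with hμ
    have hagree : ∀ j, j < i → sigmaPerm p n i μ j = μ j :=
      fun j hj => sigmaPerm_apply_of_ne i _ (ne_of_lt hj)
    have h1 := hhtri i (sigmaPerm p n i μ) μ hagree
    have h2 : h μ i = u i := by rw [hμ, Equiv.Perm.apply_inv_self]
    have h3 : u i = 0 := extMap_apply_of_le x (le_refl k)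
    have hσμ : sigmaPerm p n i μ i = μ i + (if ∀ j, j < i → μ j = 0 then 1 else 0) := by
      rw [sigmaPerm_apply]
      by_cases hB : ∀ j, j < i → μ j = 0
      · rw [if_pos ⟨rfl, hB⟩, if_pos hB]
      · rw [if_neg (fun hc => hB hc.2), if_neg hB]
        ring
    have hval : h (sigmaPerm p n i μ) i = (if ∀ j, j < i → μ j = 0 then 1 else 0) := by
      rw [h2, h3] at h1
      linear_combination h1 + hσμ
    rw [hval]
    by_cases hxa : x = a
    · subst hxa
      rw [if_pos rfl, if_pos]
      intro j hj
      rw [hμ, hu, hinv0]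
      rfl
    · rw [if_neg hxa, if_neg]
      intro hall
      apply hxa
      have hagree' : ∀ j : Fin n, j < i → μ j = h⁻¹ (extMap p n k a) j := by
        intro j hj
        rw [hinv0, hall j hj]
        rfl
      have himg : ∀ j : Fin n, j < i → u j = extMap p n k a j := by
        intro j hj
        have := hhtri.apply_eq (fun j' hj' => hagree' j' (hj'.trans hj)) (hagree' j hj)
        rw [hμ, Equiv.Perm.apply_inv_self, hinv0] at this
        rw [this, ← hinv0, Equiv.Perm.apply_inv_self]
      funext j'
      have hj' : ((⟨(j' : ℕ), lt_of_lt_of_le j'.isLt hk.le⟩ : Fin n) : ℕ) < k := j'.isLt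
      have := himg ⟨(j' : ℕ), lt_of_lt_of_le j'.isLt hk.le⟩ j'.isLt
      rw [hu, extMap_apply_lt x hj', extMap_apply_lt a hj'] at this
      simpa using this

lemma phi_surj (hp : p.Prime) {k : ℕ} (hk : k < n) (f : (Fin k → ZMod p) → ZMod p) :
    ∃ g, (g ∈ PSyl p n ∧ g ∈ Tk p n k) ∧ ∀ x : Fin k → ZMod p,
      g (extMap p n k x) ⟨k, hk⟩ = f x := by
  haveI : NeZero p := ⟨hp.ne_zero⟩
  set i : Fin n := ⟨k, hk⟩
  let S : AddSubgroup ((Fin k → ZMod p) → ZMod p) :=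
  { carrier := {f | ∃ g, (g ∈ PSyl p n ∧ g ∈ Tk p n k) ∧
      ∀ x : Fin k → ZMod p, g (extMap p n k x) i = f x}
    zero_mem' := ⟨1, ⟨one_mem _, one_mem _⟩,
      fun x => extMap_apply_of_le x (le_refl k)⟩
    add_mem' := by
      rintro f1 f2 ⟨g1, ⟨hg1P, hg1T⟩, hg1⟩ ⟨g2, ⟨hg2P, hg2T⟩, hg2⟩
      refine ⟨g1 * g2, ⟨mul_mem hg1P hg2P, mul_mem hg1T hg2T⟩, fun x => ?_⟩
      rw [phi_add hk hg1T.1 hg2T x, hg1 x, hg2 x, Pi.add_apply]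
    neg_mem' := by
      rintro f ⟨g, ⟨hgP, hgT⟩, hg⟩
      refine ⟨g⁻¹, ⟨inv_mem hgP, inv_mem hgT⟩, fun x => ?_⟩
      have h1 := phi_add hk (hgT.1.inv) hgT x
      rw [inv_mul_cancel] at h1
      have h2 : (1 : Equiv.Perm (Fin n → ZMod p)) (extMap p n k x) i = 0 :=
        extMap_apply_of_le x (le_refl k)
      rw [hg x] at h1
      rw [Pi.neg_apply]
      linear_combination h2 - h1
    }
  have hS : f ∈ S := by
    have hf : f = ∑ a ∈ Finset.univ, fun x => if x = a then f a else 0 := by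
      funext x
      rw [Finset.sum_apply]
      simp
    rw [hf]
    refine AddSubgroup.sum_mem S fun a _ => ?_
    have hrw : (fun x => if x = a then f a else 0) =
        (f a).val • fun x => if x = a then (1 : ZMod p) else 0 := by
      funext x
      rw [Pi.smul_apply]
      split_ifs with h
      · simp [nsmul_eq_mul, ZMod.natCast_val, ZMod.cast_id]
      · rw [smul_zero]
    rw [hrw]
    exact AddSubgroup.nsmul_mem S (exists_delta hp hk a) _
  exact hS

lemma card_step (hp : p.Prime) {k : ℕ} (hk : k < n) :
    Nat.card ↥(PSyl p n ⊓ Tk p n k) =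
      p ^ p ^ k * Nat.card ↥(PSyl p n ⊓ Tk p n (k + 1)) := by
  haveI : NeZero p := ⟨hp.ne_zero⟩
  set i : Fin n := ⟨k, hk⟩
  set W := (Fin k → ZMod p) → ZMod p with hW
  let φ : Equiv.Perm (Fin n → ZMod p) → W := fun g x => g (extMap p n k x) i
  let s : W → Equiv.Perm (Fin n → ZMod p) := fun f => (phi_surj hp hk f).choose
  have hsP : ∀ f, s f ∈ PSyl p n := fun f => (phi_surj hp hk f).choose_spec.1.1
  have hsT : ∀ f, s f ∈ Tk p n k := fun f => (phi_surj hp hk f).choose_spec.1.2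
  have hsval : ∀ f, φ (s f) = f := fun f => funext fun x =>
    (phi_surj hp hk f).choose_spec.2 x
  have hφadd : ∀ g g' : Equiv.Perm (Fin n → ZMod p), IsTri p n g → g' ∈ Tk p n k →
      φ (g * g') = φ g + φ g' := by
    intro g g' hg hg'
    funext x
    rw [Pi.add_apply]
    exact phi_add hk hg hg' x
  have hφ1 : φ 1 = 0 := funext fun x => extMap_apply_of_le x (le_refl k)
  have hφsinv : ∀ f, φ (s f)⁻¹ = - f := by
    intro f
    have h1 := hφadd (s f)⁻¹ (s f) ((hsT f).1.inv) (hsT f)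
    rw [inv_mul_cancel, hφ1, hsval f] at h1
    exact eq_neg_of_add_eq_zero_left h1.symm
  have hφTk1 : ∀ g : Equiv.Perm (Fin n → ZMod p), g ∈ Tk p n (k + 1) → φ g = 0 := by
    intro g hg
    funext x
    rw [Pi.zero_apply]
    show g (extMap p n k x) i = 0
    rw [hg.2 i (Nat.lt_succ_self k) (extMap p n k x)]
    exact extMap_apply_of_le x (le_refl k)
  have e : ↥(PSyl p n ⊓ Tk p n k) ≃ W × ↥(PSyl p n ⊓ Tk p n (k + 1)) :=
  { toFun := fun g => (φ ↑g, ⟨(s (φ ↑g))⁻¹ * ↑g, by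
      have hgmem := g.2
      rw [Subgroup.mem_inf] at hgmem
      have hmemk : (s (φ ↑g))⁻¹ * (↑g : Equiv.Perm (Fin n → ZMod p)) ∈ Tk p n k :=
        mul_mem (inv_mem (hsT _)) hgmem.2
      have hzero : φ ((s (φ ↑g))⁻¹ * ↑g) = 0 := by
        rw [hφadd _ _ ((hsT _).1.inv) hgmem.2, hφsinv]
        exact neg_add_cancel _
      rw [Subgroup.mem_inf]
      exact ⟨mul_mem (inv_mem (hsP _)) hgmem.1,
        ker_char hk hmemk fun x => congrFun hzero x⟩⟩)
    invFun := fun fh => ⟨s fh.1 * ↑fh.2, by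
      have h2 := fh.2.2
      rw [Subgroup.mem_inf] at h2
      rw [Subgroup.mem_inf]
      exact ⟨mul_mem (hsP _) h2.1, mul_mem (hsT _) (Tk_antitone (Nat.le_succ k) h2.2)⟩⟩
    left_inv := fun g => by
      apply Subtype.ext
      exact mul_inv_cancel_left _ _
    right_inv := fun fh => by
      have h2 := fh.2.2
      rw [Subgroup.mem_inf] at h2
      have hval : φ (s fh.1 * ↑fh.2) = fh.1 := by
        rw [hφadd _ _ (hsT _).1 (Tk_antitone (Nat.le_succ k) h2.2), hsval,
          hφTk1 _ h2.2, add_zero]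
      refine Prod.ext hval (Subtype.ext ?_)
      show (s (φ (s fh.1 * ↑fh.2)))⁻¹ * (s fh.1 * ↑fh.2) = ↑fh.2
      rw [hval, inv_mul_cancel_left] }
  rw [Nat.card_congr e, Nat.card_prod]
  congr 1
  have h1 : Nat.card W = Nat.card (ZMod p) ^ Nat.card (Fin k → ZMod p) := Nat.card_fun
  have h2 : Nat.card (Fin k → ZMod p) = Nat.card (ZMod p) ^ Nat.card (Fin k) := Nat.card_fun
  rw [h1, h2, Nat.card_zmod]
  simp

lemma card_base : Nat.card ↥(PSyl p n ⊓ Tk p n n) = 1 := by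
  have hbot : PSyl p n ⊓ Tk p n n = ⊥ := by
    rw [eq_bot_iff]
    intro g hg
    rw [Subgroup.mem_inf] at hg
    rw [Subgroup.mem_bot]
    apply Equiv.ext
    intro lam
    funext j
    exact hg.2.2 j j.isLt lam
  rw [hbot, Subgroup.card_bot]

lemma card_inter (hp : p.Prime) : ∀ d, d ≤ n →
    Nat.card ↥(PSyl p n ⊓ Tk p n (n - d)) = p ^ (∑ i ∈ Finset.Ico (n - d) n, p ^ i) := by
  intro d
  induction d with
  | zero =>
    intro _
    rw [Nat.sub_zero, Finset.Ico_self, Finset.sum_empty, pow_zero]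
    exact card_base
  | succ d ih =>
    intro hd
    have hk : n - (d + 1) < n := by omega
    have hk1 : n - (d + 1) + 1 = n - d := by omega
    rw [card_step hp hk, hk1, ih (by omega),
      Finset.sum_eq_sum_Ico_succ_bot (by omega : n - (d+1) < n), hk1, pow_add]

lemma card_PSyl (hp : p.Prime) :
    Nat.card ↥(PSyl p n) = p ^ (∑ i ∈ Finset.range n, p ^ i) := by
  have h0 : PSyl p n ⊓ Tk p n 0 = PSyl p n := inf_of_le_left PSyl_le_Tk_zero
  have := card_inter hp n (le_refl n)
  rw [Nat.sub_self] at this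
  rw [← h0, this, Finset.range_eq_Ico]

end Aux

/-- The subgroup `⟨σ_0, …, σ_{n-1}⟩` of `Sym(F_p^n)` has order
`p ^ (1 + p + ⋯ + p^{n-1})`, hence is a Sylow `p`-subgroup of `Sym(F_p^n)`, and it
acts transitively on `F_p^n`. -/
theorem card_PSyl_and_isSylow_and_transitive (hp : p.Prime) (hn : 1 ≤ n) :
    Nat.card (PSyl p n) = p ^ (∑ i ∈ Finset.range n, p ^ i) ∧
    (∃ S : Sylow p (Equiv.Perm (Fin n → ZMod p)),
      (S : Subgroup (Equiv.Perm (Fin n → ZMod p))) = PSyl p n) ∧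
    (∀ v w : Fin n → ZMod p, ∃ g ∈ PSyl p n, g v = w) := by
  haveI : Fact p.Prime := ⟨hp⟩
  haveI : NeZero p := ⟨hp.ne_zero⟩
  have hcard := card_PSyl (p := p) (n := n) hp
  refine ⟨hcard, ?_, fun v w => PSyl_transitive hp v w⟩
  have hpg : IsPGroup p ↥(PSyl p n) := IsPGroup.of_card hcard
  obtain ⟨S, hS⟩ := hpg.exists_le_sylow
  have hScard : Nat.card ↥(S : Subgroup (Equiv.Perm (Fin n → ZMod p))) =
      p ^ ((Nat.card (Equiv.Perm (Fin n → ZMod p))).factorization p) :=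
    S.card_eq_multiplicity
  have hG : Nat.card (Equiv.Perm (Fin n → ZMod p)) = (p ^ n).factorial := by
    rw [Nat.card_eq_fintype_card, Fintype.card_perm]
    congr 1
    simp [ZMod.card]
  have hfact : ((p ^ n).factorial.factorization) p = ∑ i ∈ Finset.range n, p ^ i := by
    rw [Nat.factorization_def _ hp,
      padicValNat_factorial (p := p)
        (show Nat.log p (p ^ n) < n + 1 by rw [Nat.log_pow hp.one_lt]; omega)]
    have h1 : ∀ i ∈ Finset.Ico 1 (n + 1), p ^ n / p ^ i = p ^ (n - i) := by
      intro i hi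
      rw [Finset.mem_Ico] at hi
      rw [Nat.pow_div (by omega) hp.pos]
    rw [Finset.sum_congr rfl h1, Finset.sum_Ico_eq_sum_range]
    simp only [Nat.add_sub_cancel]
    have h2 : ∀ i ∈ Finset.range n, p ^ (n - (1 + i)) = p ^ (n - 1 - i) := by
      intro i _
      congr 1
      omega
    rw [Finset.sum_congr rfl h2, Finset.sum_range_reflect (fun i => p ^ i) n]
  have hle : Nat.card ↥(S : Subgroup (Equiv.Perm (Fin n → ZMod p))) ≤
      Nat.card ↥(PSyl p n) := by
    rw [hScard, hG, hfact, hcard]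
  exact ⟨S, (Subgroup.eq_of_le_of_card_ge hS hle).symm⟩
end

section
/- Let p be a prime and n ≥ 1. Any two P_n-conjugates of σ_{n−1} commute with each other; that is, for all x, y ∈ P_n we have (x σ_{n−1} x^{-1})(y σ_{n−1} y^{-1}) = (y σ_{n−1} y^{-1})(x σ_{n−1} x^{-1}). -/
variable (p n : ℕ)

/-- The permutation adding `1` to coordinate `i`. -/
def bumpPerm (i : Fin n) : Equiv.Perm (Fin n → ZMod p) where
  toFun lam := fun k => if k = i then lam k + 1 else lam k
  invFun lam := fun k => if k = i then lam k - 1 else lam k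
  left_inv lam := by funext k; by_cases h : k = i <;> simp [h]
  right_inv lam := by funext k; by_cases h : k = i <;> simp [h]

lemma bumpPerm_apply (i : Fin n) (lam : Fin n → ZMod p) (k : Fin n) :
    bumpPerm p n i lam k = if k = i then lam k + 1 else lam k := rfl

lemma bumpPerm_apply_ne (i : Fin n) (lam : Fin n → ZMod p) {k : Fin n} (h : k ≠ i) :
    bumpPerm p n i lam k = lam k := by simp [bumpPerm_apply, h]

lemma gen_comm_bump (hn : 1 ≤ n) (k : Fin n) (lam : Fin n → ZMod p) :
    sigmaPerm p n k (bumpPerm p n ⟨n - 1, Nat.sub_lt hn Nat.one_pos⟩ lam)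
      = bumpPerm p n ⟨n - 1, Nat.sub_lt hn Nat.one_pos⟩ (sigmaPerm p n k lam) := by
  set L : Fin n := ⟨n - 1, by omega⟩ with hL
  have hkL : ∀ j : Fin n, j < k → j ≠ L := by
    intro j hj hjL
    have hk : k.val ≤ n - 1 := by omega
    have : j.val < k.val := hj
    rw [hjL] at this
    simp [hL] at this
    omega
  have hcond : (∀ j : Fin n, j < k → bumpPerm p n L lam j = 0)
      ↔ (∀ j : Fin n, j < k → lam j = 0) := by
    constructor
    · intro h j hj
      have := h j hj
      rwa [bumpPerm_apply_ne p n L lam (hkL j hj)] at this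
    · intro h j hj
      rw [bumpPerm_apply_ne p n L lam (hkL j hj)]
      exact h j hj
  show sigmaFun p n k (bumpPerm p n L lam) = bumpPerm p n L (sigmaFun p n k lam)
  funext m
  have hiff : (∀ j : Fin n, j < k → bumpPerm p n L lam j = 0)
      = (∀ j : Fin n, j < k → lam j = 0) := propext hcond
  simp only [sigmaFun, hiff]
  by_cases hc : ∀ j : Fin n, j < k → lam j = 0 <;> by_cases hmk : m = k <;>
    by_cases hmL : m = L <;> simp [sigmaFun, bumpPerm_apply, hmk, hmL, hc] <;>
    split_ifs <;> simp_all

lemma psyl_comm_bump (hn : 1 ≤ n) {z : Equiv.Perm (Fin n → ZMod p)} (hz : z ∈ PSyl p n)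
    (lam : Fin n → ZMod p) :
    z (bumpPerm p n ⟨n - 1, Nat.sub_lt hn Nat.one_pos⟩ lam) = bumpPerm p n ⟨n - 1, Nat.sub_lt hn Nat.one_pos⟩ (z lam) := by
  set L : Fin n := ⟨n - 1, by omega⟩
  have hle : PSyl p n ≤ Subgroup.centralizer {bumpPerm p n L} := by
    apply Subgroup.closure_le _ |>.mpr
    rintro _ ⟨k, rfl⟩
    rw [SetLike.mem_coe, Subgroup.mem_centralizer_iff]
    rintro g hg
    rw [Set.mem_singleton_iff] at hg
    subst hg
    refine Equiv.ext fun mu => ?_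
    exact (gen_comm_bump p n hn k mu).symm
  have := hle hz
  rw [Subgroup.mem_centralizer_iff] at this
  have h := this (bumpPerm p n L) rfl
  calc z (bumpPerm p n L lam) = (z * bumpPerm p n L) lam := rfl
    _ = (bumpPerm p n L * z) lam := by rw [← h]
    _ = bumpPerm p n L (z lam) := rfl

lemma conj_apply (hn : 1 ≤ n) {z : Equiv.Perm (Fin n → ZMod p)} (hz : z ∈ PSyl p n)
    (lam : Fin n → ZMod p) :
    (z * sigmaPerm p n ⟨n - 1, Nat.sub_lt hn Nat.one_pos⟩ * z⁻¹) lam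
      = if ∀ j : Fin n, j < (⟨n - 1, Nat.sub_lt hn Nat.one_pos⟩ : Fin n) → (z⁻¹ lam) j = 0
        then bumpPerm p n ⟨n - 1, Nat.sub_lt hn Nat.one_pos⟩ lam else lam := by
  set L : Fin n := ⟨n - 1, by omega⟩
  have hmul : (z * sigmaPerm p n L * z⁻¹) lam = z (sigmaPerm p n L (z⁻¹ lam)) := rfl
  by_cases hc : ∀ j : Fin n, j < L → (z⁻¹ lam) j = 0
  · rw [if_pos hc, hmul]
    have h1 : sigmaPerm p n L (z⁻¹ lam) = bumpPerm p n L (z⁻¹ lam) := by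
      show sigmaFun p n L (z⁻¹ lam) = _
      funext m
      simp only [sigmaFun]
      by_cases hm : m = L
      · rw [if_pos ⟨hm, hc⟩, bumpPerm_apply, if_pos hm]
      · rw [if_neg (fun h => hm h.1), bumpPerm_apply, if_neg hm]
    rw [h1, psyl_comm_bump p n hn hz, Equiv.Perm.coe_inv, Equiv.apply_symm_apply]
  · rw [if_neg hc, hmul]
    have h1 : sigmaPerm p n L (z⁻¹ lam) = z⁻¹ lam := by
      show sigmaFun p n L (z⁻¹ lam) = _
      funext m
      simp only [sigmaFun]
      rw [if_neg (by tauto)]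
    rw [h1, Equiv.Perm.coe_inv, Equiv.apply_symm_apply]

lemma cond_bump (hn : 1 ≤ n) {z : Equiv.Perm (Fin n → ZMod p)} (hz : z ∈ PSyl p n)
    (lam : Fin n → ZMod p) :
    (∀ j : Fin n, j < (⟨n - 1, Nat.sub_lt hn Nat.one_pos⟩ : Fin n) →
        (z⁻¹ (bumpPerm p n ⟨n - 1, Nat.sub_lt hn Nat.one_pos⟩ lam)) j = 0)
      ↔ (∀ j : Fin n, j < (⟨n - 1, Nat.sub_lt hn Nat.one_pos⟩ : Fin n) → (z⁻¹ lam) j = 0) := by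
  have hinv : z⁻¹ (bumpPerm p n ⟨n - 1, by omega⟩ lam)
      = bumpPerm p n ⟨n - 1, by omega⟩ (z⁻¹ lam) := by
    have h2 := psyl_comm_bump p n hn hz (z⁻¹ lam)
    rw [Equiv.Perm.coe_inv, Equiv.apply_symm_apply] at h2
    rw [← h2, Equiv.Perm.coe_inv, Equiv.symm_apply_apply]
  rw [hinv]
  constructor <;> intro h j hj <;> have hh := h j hj
  · rwa [bumpPerm_apply_ne p n _ _ (ne_of_lt hj)] at hh
  · rwa [bumpPerm_apply_ne p n _ _ (ne_of_lt hj)]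

/-- Any two `P_n`-conjugates of `σ_{n-1}` commute with each other. -/
theorem conjugates_of_sigma_last_commute (hp : p.Prime) (hn : 1 ≤ n)
    (x y : Equiv.Perm (Fin n → ZMod p)) (hx : x ∈ PSyl p n) (hy : y ∈ PSyl p n) :
    (x * sigmaPerm p n ⟨n - 1, by omega⟩ * x⁻¹) * (y * sigmaPerm p n ⟨n - 1, by omega⟩ * y⁻¹)
      = (y * sigmaPerm p n ⟨n - 1, by omega⟩ * y⁻¹) * (x * sigmaPerm p n ⟨n - 1, by omega⟩ * x⁻¹) := by
  refine Equiv.ext fun lam => ?_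
  show (x * sigmaPerm p n ⟨n - 1, by omega⟩ * x⁻¹) ((y * sigmaPerm p n ⟨n - 1, by omega⟩ * y⁻¹) lam)
    = (y * sigmaPerm p n ⟨n - 1, by omega⟩ * y⁻¹) ((x * sigmaPerm p n ⟨n - 1, by omega⟩ * x⁻¹) lam)
  rw [conj_apply p n hn hy lam, conj_apply p n hn hx lam]
  by_cases hB : ∀ j : Fin n, j < (⟨n - 1, by omega⟩ : Fin n) → (y⁻¹ lam) j = 0 <;>
    by_cases hA : ∀ j : Fin n, j < (⟨n - 1, by omega⟩ : Fin n) → (x⁻¹ lam) j = 0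
  · rw [if_pos hB, if_pos hA, conj_apply p n hn hx _, conj_apply p n hn hy _,
      if_pos ((cond_bump p n hn hx lam).mpr hA), if_pos ((cond_bump p n hn hy lam).mpr hB)]
  · rw [if_pos hB, if_neg hA, conj_apply p n hn hx _, conj_apply p n hn hy lam,
      if_neg (fun h => hA ((cond_bump p n hn hx lam).mp h)), if_pos hB]
  · rw [if_neg hB, if_pos hA, conj_apply p n hn hx lam, conj_apply p n hn hy _,
      if_neg (fun h => hB ((cond_bump p n hn hy lam).mp h)), if_pos hA]
  · rw [if_neg hB, if_neg hA, conj_apply p n hn hx lam, conj_apply p n hn hy lam,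
      if_neg hA, if_neg hB]
end
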